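/- arXiv:1502.05618 — 7 statements merged into one kernel-verified Lean document; each statement's English description precedes it below -/
import Mathlib

section
/- Any two countably infinite models of the Rado multigraph axioms (A0)-(A4) are isomorphic. -/
structure RadoPartIso (V W : Type) (μ : V → V → ℕ) (ν : W → W → ℕ) where
  n : ℕ
  a : Fin n → V
  b : Fin n → W
  ha : Function.Injective a
  hb : Function.Injective b
  hab : ∀ i j, ν (b i) (b j) = μ (a i) (a j)

namespace RadoPartIso

variable {V W : Type} {μ : V → V → ℕ} {ν : W → W → ℕ}

def Ext (p q : RadoPartIso V W μ ν) : Prop :=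
  ∃ h : p.n ≤ q.n, (∀ i, q.a (Fin.castLE h i) = p.a i) ∧ (∀ i, q.b (Fin.castLE h i) = p.b i)

lemma Ext.refl (p : RadoPartIso V W μ ν) : Ext p p := ⟨le_refl _, fun _ => rfl, fun _ => rfl⟩

lemma Ext.trans {p q r : RadoPartIso V W μ ν} (h1 : Ext p q) (h2 : Ext q r) : Ext p r := by
  obtain ⟨h1n, h1a, h1b⟩ := h1
  obtain ⟨h2n, h2a, h2b⟩ := h2
  refine ⟨h1n.trans h2n, fun i => ?_, fun i => ?_⟩
  · rw [← h1a i, ← h2a (Fin.castLE h1n i)]; rfl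
  · rw [← h1b i, ← h2b (Fin.castLE h1n i)]; rfl

def flip (p : RadoPartIso V W μ ν) : RadoPartIso W V ν μ :=
  ⟨p.n, p.b, p.a, p.hb, p.ha, fun i j => (p.hab i j).symm⟩

lemma Ext.flip {p q : RadoPartIso V W μ ν} (h : Ext p q) : Ext p.flip q.flip := by
  obtain ⟨hn, hA, hB⟩ := h
  exact ⟨hn, hB, hA⟩

lemma snoc_inj {n : ℕ} {α : Type} {f : Fin n → α} (hf : Function.Injective f) {x : α}
    (hx : ∀ i, f i ≠ x) : Function.Injective (Fin.snoc f x : Fin (n+1) → α) := by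
  intro i j hij
  induction i using Fin.lastCases with
  | last =>
    induction j using Fin.lastCases with
    | last => rfl
    | cast j =>
      rw [Fin.snoc_last, Fin.snoc_castSucc] at hij
      exact absurd hij.symm (hx j)
  | cast i =>
    induction j using Fin.lastCases with
    | last =>
      rw [Fin.snoc_last, Fin.snoc_castSucc] at hij
      exact absurd hij (hx i)
    | cast j =>
      rw [Fin.snoc_castSucc, Fin.snoc_castSucc] at hij
      exact congrArg Fin.castSucc (hf hij)

lemma castLE_succ {n : ℕ} (i : Fin n) :
    Fin.castLE (Nat.le_succ n) i = Fin.castSucc i := rfl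

lemma extend (hμirr : ∀ x, μ x x = 0) (hμsymm : ∀ x y, μ x y = μ y x)
    (hνsymm : ∀ x y, ν x y = ν y x) (hνirr : ∀ x, ν x x = 0)
    (hνext : ∀ (n : ℕ) (u : Fin n → W), Function.Injective u →
      ∀ m : Fin n → ℕ, ∃ v : W, (∀ i, v ≠ u i) ∧ ∀ i, ν (u i) v = m i)
    (p : RadoPartIso V W μ ν) (v : V) :
    ∃ q : RadoPartIso V W μ ν, Ext p q ∧ ∃ i, q.a i = v := by
  by_cases hv : ∃ i, p.a i = v
  · exact ⟨p, Ext.refl p, hv⟩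
  · push_neg at hv
    obtain ⟨w, hw1, hw2⟩ := hνext p.n p.b p.hb (fun i => μ (p.a i) v)
    refine ⟨⟨p.n + 1, Fin.snoc p.a v, Fin.snoc p.b w, ?_, ?_, ?_⟩, ?_, ?_⟩
    · exact snoc_inj p.ha hv
    · exact snoc_inj p.hb (fun i h => hw1 i h.symm)
    · intro i j
      induction i using Fin.lastCases with
      | last =>
        induction j using Fin.lastCases with
        | last => simp only [Fin.snoc_last]; rw [hνirr, hμirr]
        | cast j =>
          simp only [Fin.snoc_last, Fin.snoc_castSucc]
          rw [hνsymm, hw2 j, hμsymm]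
      | cast i =>
        induction j using Fin.lastCases with
        | last =>
          simp only [Fin.snoc_last, Fin.snoc_castSucc]
          exact hw2 i
        | cast j =>
          simp only [Fin.snoc_castSucc]
          exact p.hab i j
    · refine ⟨Nat.le_succ _, fun i => ?_, fun i => ?_⟩
      · show (Fin.snoc p.a v : Fin (p.n+1) → V) (Fin.castLE _ i) = p.a i
        rw [castLE_succ, Fin.snoc_castSucc]
      · show (Fin.snoc p.b w : Fin (p.n+1) → W) (Fin.castLE _ i) = p.b i
        rw [castLE_succ, Fin.snoc_castSucc]
    · exact ⟨Fin.last _, by simp⟩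

end RadoPartIso

/-- A countable model of the Rado multigraph axioms (A0)-(A4), encoded by its
symmetric edge-multiplicity function `μ : V → V → ℕ` (so `E_j(u,v)` means
`j ≤ μ u v`; axioms (A0), (A2), (A3) are then automatic).  (A1) corresponds to
symmetry and irreflexivity (`μ v v = 0`), and (A4) is the extension property. -/
theorem rado_multigraph_categorical
    (V W : Type) [Countable V] [Infinite V] [Countable W] [Infinite W]
    (μ : V → V → ℕ) (ν : W → W → ℕ)
    (hμsymm : ∀ x y, μ x y = μ y x) (hμirr : ∀ x, μ x x = 0)
    (hνsymm : ∀ x y, ν x y = ν y x) (hνirr : ∀ x, ν x x = 0)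
    (hμext : ∀ (n : ℕ) (u : Fin n → V), Function.Injective u →
      ∀ m : Fin n → ℕ, ∃ v : V, (∀ i, v ≠ u i) ∧ ∀ i, μ (u i) v = m i)
    (hνext : ∀ (n : ℕ) (u : Fin n → W), Function.Injective u →
      ∀ m : Fin n → ℕ, ∃ v : W, (∀ i, v ≠ u i) ∧ ∀ i, ν (u i) v = m i) :
    ∃ e : V ≃ W, ∀ x y, ν (e x) (e y) = μ x y := by
  classical
  obtain ⟨eV⟩ : Nonempty (ℕ ≃ V) := nonempty_equiv_of_countable
  obtain ⟨eW⟩ : Nonempty (ℕ ≃ W) := nonempty_equiv_of_countable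
  have extL : ∀ (p : RadoPartIso V W μ ν) (v : V),
      ∃ q, RadoPartIso.Ext p q ∧ ∃ i, q.a i = v :=
    RadoPartIso.extend hμirr hμsymm hνsymm hνirr hνext
  have extR : ∀ (p : RadoPartIso V W μ ν) (w : W),
      ∃ q, RadoPartIso.Ext p q ∧ ∃ i, q.b i = w := by
    intro p w
    obtain ⟨q, hq, i, hi⟩ :=
      RadoPartIso.extend hνirr hνsymm hμsymm hμirr hμext p.flip w
    exact ⟨q.flip, hq.flip, i, hi⟩
  choose fL hLext hLmem using extL
  choose fR hRext hRmem using extR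
  set c0 : RadoPartIso V W μ ν :=
    ⟨0, Fin.elim0, Fin.elim0, Function.injective_of_subsingleton _,
      Function.injective_of_subsingleton _, fun i => i.elim0⟩ with hc0
  set c : ℕ → RadoPartIso V W μ ν :=
    fun n => Nat.rec c0 (fun n p => fR (fL p (eV n)) (eW n)) n with hc
  have hc_succ : ∀ n, c (n+1) = fR (fL (c n) (eV n)) (eW n) := fun n => rfl
  have hmono : ∀ {m n : ℕ}, m ≤ n → RadoPartIso.Ext (c m) (c n) := by
    intro m n h
    induction n, h using Nat.le_induction with
    | base => exact RadoPartIso.Ext.refl _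
    | succ n hmn ih =>
      refine ih.trans ?_
      rw [hc_succ]
      exact (hLext (c n) (eV n)).trans (hRext _ (eW n))
  have hcovA : ∀ v : V, ∃ n i, (c n).a i = v := by
    intro v
    obtain ⟨i, hi⟩ := hLmem (c (eV.symm v)) (eV (eV.symm v))
    obtain ⟨hle, hA, _⟩ := hRext (fL (c (eV.symm v)) (eV (eV.symm v))) (eW (eV.symm v))
    refine ⟨eV.symm v + 1, Fin.castLE hle i, ?_⟩
    show (fR (fL (c (eV.symm v)) (eV (eV.symm v))) (eW (eV.symm v))).a (Fin.castLE hle i) = v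
    rw [hA i, hi, Equiv.apply_symm_apply]
  have hcovB : ∀ w : W, ∃ n i, (c n).b i = w := by
    intro w
    obtain ⟨i, hi⟩ := hRmem (fL (c (eW.symm w)) (eV (eW.symm w))) (eW (eW.symm w))
    refine ⟨eW.symm w + 1, i, ?_⟩
    show (fR (fL (c (eW.symm w)) (eV (eW.symm w))) (eW (eW.symm w))).b i = w
    rw [hi, Equiv.apply_symm_apply]
  have consA : ∀ {m n : ℕ} {i j}, (c m).a i = (c n).a j → (c m).b i = (c n).b j := by
    intro m n i j hij
    rcases le_total m n with h | h
    · obtain ⟨hle, hA, hB⟩ := hmono h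
      have h1 : (c n).a (Fin.castLE hle i) = (c n).a j := by rw [hA]; exact hij
      rw [← hB i, (c n).ha h1]
    · obtain ⟨hle, hA, hB⟩ := hmono h
      have h1 : (c m).a (Fin.castLE hle j) = (c m).a i := by rw [hA]; exact hij.symm
      rw [← hB j, (c m).ha h1]
  have consB : ∀ {m n : ℕ} {i j}, (c m).b i = (c n).b j → (c m).a i = (c n).a j := by
    intro m n i j hij
    rcases le_total m n with h | h
    · obtain ⟨hle, hA, hB⟩ := hmono h
      have h1 : (c n).b (Fin.castLE hle i) = (c n).b j := by rw [hB]; exact hij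
      rw [← hA i, (c n).hb h1]
    · obtain ⟨hle, hA, hB⟩ := hmono h
      have h1 : (c m).b (Fin.castLE hle j) = (c m).b i := by rw [hB]; exact hij.symm
      rw [← hA j, (c m).hb h1]
  choose nA iA hA using hcovA
  choose nB iB hB using hcovB
  set F : V → W := fun v => (c (nA v)).b (iA v) with hF0
  set G : W → V := fun w => (c (nB w)).a (iB w) with hG0
  have hF : ∀ (v : V) (n : ℕ) (i), (c n).a i = v → F v = (c n).b i := by
    intro v n i h
    exact consA (by rw [hA v, h])
  have hG : ∀ (w : W) (n : ℕ) (i), (c n).b i = w → G w = (c n).a i := by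
    intro w n i h
    exact consB (by rw [hB w, h])
  have hGF : ∀ v, G (F v) = v := by
    intro v
    rw [hG (F v) (nA v) (iA v) rfl, hA v]
  have hFG : ∀ w, F (G w) = w := by
    intro w
    rw [hF (G w) (nB w) (iB w) rfl, hB w]
  refine ⟨⟨F, G, hGF, hFG⟩, ?_⟩
  intro x y
  show ν (F x) (F y) = μ x y
  set N := max (nA x) (nA y) with hN
  obtain ⟨hle1, hA1, hB1⟩ := hmono (le_max_left (nA x) (nA y))
  obtain ⟨hle2, hA2, hB2⟩ := hmono (le_max_right (nA x) (nA y))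
  have hx : (c N).a (Fin.castLE hle1 (iA x)) = x := by rw [hA1, hA x]
  have hy : (c N).a (Fin.castLE hle2 (iA y)) = y := by rw [hA2, hA y]
  rw [hF x N _ hx, hF y N _ hy, (c N).hab, hx, hy]
end

section
/- The Rado multigraph is 1-transitive: for any two vertices v_1, v_2 of a countable model of the Rado multigraph axioms, there is an automorphism sending v_1 to v_2. -/
section RadoAux

variable {V : Type} (μ : V → V → ℕ)

/-- A finite partial isomorphism, given as a tuple of pairs. -/
def RGood {k : ℕ} (p : Fin k → V × V) : Prop :=
  Function.Injective (fun i => (p i).1) ∧ Function.Injective (fun i => (p i).2) ∧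
    ∀ i j, μ (p i).1 (p j).1 = μ (p i).2 (p j).2


lemma rsnoc_fst (hsymm : ∀ x y, μ x y = μ y x) (hirr : ∀ x, μ x x = 0)
    (hext : ∀ (n : ℕ) (u : Fin n → V), Function.Injective u →
      ∀ m : Fin n → ℕ, ∃ v : V, (∀ i, v ≠ u i) ∧ ∀ i, μ (u i) v = m i)
    {k : ℕ} {p : Fin k → V × V} (hp : RGood μ p)
    (x : V) (hx : ∀ i, x ≠ (p i).1) :
    ∃ y : V, RGood μ (Fin.snoc p (x, y)) := by
  obtain ⟨y, hy, hμ⟩ := hext k (fun i => (p i).2) hp.2.1 (fun i => μ (p i).1 x)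
  refine ⟨y, ?_, ?_, ?_⟩
  · intro i j hij
    induction i using Fin.lastCases with
    | last =>
      induction j using Fin.lastCases with
      | last => rfl
      | cast j =>
        simp only [Fin.snoc_last, Fin.snoc_castSucc] at hij
        exact absurd hij (hx j)
    | cast i =>
      induction j using Fin.lastCases with
      | last =>
        simp only [Fin.snoc_last, Fin.snoc_castSucc] at hij
        exact absurd hij.symm (hx i)
      | cast j =>
        simp only [Fin.snoc_castSucc] at hij
        exact congrArg Fin.castSucc (hp.1 hij)
  · intro i j hij
    induction i using Fin.lastCases with
    | last =>
      induction j using Fin.lastCases with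
      | last => rfl
      | cast j =>
        simp only [Fin.snoc_last, Fin.snoc_castSucc] at hij
        exact absurd hij (hy j)
    | cast i =>
      induction j using Fin.lastCases with
      | last =>
        simp only [Fin.snoc_last, Fin.snoc_castSucc] at hij
        exact absurd hij.symm (hy i)
      | cast j =>
        simp only [Fin.snoc_castSucc] at hij
        exact congrArg Fin.castSucc (hp.2.1 hij)
  · intro i j
    induction i using Fin.lastCases with
    | last =>
      induction j using Fin.lastCases with
      | last => simp only [Fin.snoc_last]; rw [hirr, hirr]
      | cast j =>
        simp only [Fin.snoc_last, Fin.snoc_castSucc]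
        rw [hsymm x, hsymm y, hμ j]
    | cast i =>
      induction j using Fin.lastCases with
      | last =>
        simp only [Fin.snoc_last, Fin.snoc_castSucc]
        exact (hμ i).symm
      | cast j =>
        simp only [Fin.snoc_castSucc]
        exact hp.2.2 i j

lemma rsnoc_snd (hsymm : ∀ x y, μ x y = μ y x) (hirr : ∀ x, μ x x = 0)
    (hext : ∀ (n : ℕ) (u : Fin n → V), Function.Injective u →
      ∀ m : Fin n → ℕ, ∃ v : V, (∀ i, v ≠ u i) ∧ ∀ i, μ (u i) v = m i)
    {k : ℕ} {p : Fin k → V × V} (hp : RGood μ p)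
    (y : V) (hy : ∀ i, y ≠ (p i).2) :
    ∃ x : V, RGood μ (Fin.snoc p (x, y)) := by
  obtain ⟨x, hx, hμ⟩ := hext k (fun i => (p i).1) hp.1 (fun i => μ (p i).2 y)
  refine ⟨x, ?_, ?_, ?_⟩
  · intro i j hij
    induction i using Fin.lastCases with
    | last =>
      induction j using Fin.lastCases with
      | last => rfl
      | cast j =>
        simp only [Fin.snoc_last, Fin.snoc_castSucc] at hij
        exact absurd hij (hx j)
    | cast i =>
      induction j using Fin.lastCases with
      | last =>
        simp only [Fin.snoc_last, Fin.snoc_castSucc] at hij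
        exact absurd hij.symm (hx i)
      | cast j =>
        simp only [Fin.snoc_castSucc] at hij
        exact congrArg Fin.castSucc (hp.1 hij)
  · intro i j hij
    induction i using Fin.lastCases with
    | last =>
      induction j using Fin.lastCases with
      | last => rfl
      | cast j =>
        simp only [Fin.snoc_last, Fin.snoc_castSucc] at hij
        exact absurd hij (hy j)
    | cast i =>
      induction j using Fin.lastCases with
      | last =>
        simp only [Fin.snoc_last, Fin.snoc_castSucc] at hij
        exact absurd hij.symm (hy i)
      | cast j =>
        simp only [Fin.snoc_castSucc] at hij
        exact congrArg Fin.castSucc (hp.2.1 hij)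
  · intro i j
    induction i using Fin.lastCases with
    | last =>
      induction j using Fin.lastCases with
      | last => simp only [Fin.snoc_last]; rw [hirr, hirr]
      | cast j =>
        simp only [Fin.snoc_last, Fin.snoc_castSucc]
        rw [hsymm x, hsymm y]
        exact hμ j
    | cast i =>
      induction j using Fin.lastCases with
      | last =>
        simp only [Fin.snoc_last, Fin.snoc_castSucc]
        exact hμ i
      | cast j =>
        simp only [Fin.snoc_castSucc]
        exact hp.2.2 i j

/-- The key extension step: extend a good tuple so that (depending on parity of
its current length) the vertex `e (n/2)` appears in the first or second
coordinates. -/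
lemma rextend (hsymm : ∀ x y, μ x y = μ y x) (hirr : ∀ x, μ x x = 0)
    (hext : ∀ (n : ℕ) (u : Fin n → V), Function.Injective u →
      ∀ m : Fin n → ℕ, ∃ v : V, (∀ i, v ≠ u i) ∧ ∀ i, μ (u i) v = m i)
    (e : ℕ ≃ V) (n : ℕ) (p : Fin (n + 1) → V × V) (hp : RGood μ p) :
    ∃ q : V × V, RGood μ (Fin.snoc p q) ∧
      (n % 2 = 0 → ∃ i : Fin (n + 2), ((Fin.snoc p q : Fin (n + 2) → V × V) i).1 = e (n / 2)) ∧
      (n % 2 = 1 → ∃ i : Fin (n + 2), ((Fin.snoc p q : Fin (n + 2) → V × V) i).2 = e (n / 2)) := by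
  rcases Nat.even_or_odd n with he | ho
  · -- even step: put `e (n/2)` into the first coordinates
    have hmod : n % 2 = 0 := Nat.even_iff.mp he
    by_cases hmem : ∃ i, (p i).1 = e (n / 2)
    · -- already there; extend with a fresh vertex
      obtain ⟨x, hx, -⟩ := hext (n + 1) (fun i => (p i).1) hp.1 (fun _ => 0)
      obtain ⟨y, hq⟩ := rsnoc_fst μ hsymm hirr hext hp x hx
      obtain ⟨i, hi⟩ := hmem
      refine ⟨(x, y), hq, fun _ => ⟨Fin.castSucc i, ?_⟩, fun h => by omega⟩
      simpa [Fin.snoc_castSucc] using hi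
    · push_neg at hmem
      obtain ⟨y, hq⟩ := rsnoc_fst μ hsymm hirr hext hp (e (n / 2))
        (fun i => fun h => hmem i h.symm)
      refine ⟨(e (n / 2), y), hq, fun _ => ⟨Fin.last (n + 1), ?_⟩, fun h => by omega⟩
      simp [Fin.snoc_last]
  · -- odd step: put `e (n/2)` into the second coordinates
    have hmod : n % 2 = 1 := Nat.odd_iff.mp ho
    by_cases hmem : ∃ i, (p i).2 = e (n / 2)
    · obtain ⟨y, hy, -⟩ := hext (n + 1) (fun i => (p i).2) hp.2.1 (fun _ => 0)
      obtain ⟨x, hq⟩ := rsnoc_snd μ hsymm hirr hext hp y hy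
      obtain ⟨i, hi⟩ := hmem
      refine ⟨(x, y), hq, fun h => by omega, fun _ => ⟨Fin.castSucc i, ?_⟩⟩
      simpa [Fin.snoc_castSucc] using hi
    · push_neg at hmem
      obtain ⟨x, hq⟩ := rsnoc_snd μ hsymm hirr hext hp (e (n / 2))
        (fun i => fun h => hmem i h.symm)
      refine ⟨(x, e (n / 2)), hq, fun h => by omega, fun _ => ⟨Fin.last (n + 1), ?_⟩⟩
      simp [Fin.snoc_last]


open scoped Classical in
/-- The next pair in the back-and-forth construction. -/
noncomputable def rnext (hsymm : ∀ x y, μ x y = μ y x) (hirr : ∀ x, μ x x = 0)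
    (hext : ∀ (n : ℕ) (u : Fin n → V), Function.Injective u →
      ∀ m : Fin n → ℕ, ∃ v : V, (∀ i, v ≠ u i) ∧ ∀ i, μ (u i) v = m i)
    (e : ℕ ≃ V) (n : ℕ) (p : Fin (n + 1) → V × V) : V × V :=
  if h : RGood μ p then Classical.choose (rextend μ hsymm hirr hext e n p h)
  else (e 0, e 0)

/-- The back-and-forth sequence of good tuples. -/
noncomputable def rseq (hsymm : ∀ x y, μ x y = μ y x) (hirr : ∀ x, μ x x = 0)
    (hext : ∀ (n : ℕ) (u : Fin n → V), Function.Injective u →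
      ∀ m : Fin n → ℕ, ∃ v : V, (∀ i, v ≠ u i) ∧ ∀ i, μ (u i) v = m i)
    (e : ℕ ≃ V) (v₁ v₂ : V) : ∀ n : ℕ, Fin (n + 1) → V × V
  | 0 => fun _ => (v₁, v₂)
  | n + 1 => Fin.snoc (rseq hsymm hirr hext e v₁ v₂ n)
      (rnext μ hsymm hirr hext e n (rseq hsymm hirr hext e v₁ v₂ n))

lemma rseq_zero (hsymm : ∀ x y, μ x y = μ y x) (hirr : ∀ x, μ x x = 0)
    (hext : ∀ (n : ℕ) (u : Fin n → V), Function.Injective u →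
      ∀ m : Fin n → ℕ, ∃ v : V, (∀ i, v ≠ u i) ∧ ∀ i, μ (u i) v = m i)
    (e : ℕ ≃ V) (v₁ v₂ : V) : rseq μ hsymm hirr hext e v₁ v₂ 0 = fun _ => (v₁, v₂) := rfl

lemma rseq_succ (hsymm : ∀ x y, μ x y = μ y x) (hirr : ∀ x, μ x x = 0)
    (hext : ∀ (n : ℕ) (u : Fin n → V), Function.Injective u →
      ∀ m : Fin n → ℕ, ∃ v : V, (∀ i, v ≠ u i) ∧ ∀ i, μ (u i) v = m i)
    (e : ℕ ≃ V) (v₁ v₂ : V) (n : ℕ) :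
    rseq μ hsymm hirr hext e v₁ v₂ (n + 1)
      = Fin.snoc (rseq μ hsymm hirr hext e v₁ v₂ n)
          (rnext μ hsymm hirr hext e n (rseq μ hsymm hirr hext e v₁ v₂ n)) := rfl

lemma rseq_good (hsymm : ∀ x y, μ x y = μ y x) (hirr : ∀ x, μ x x = 0)
    (hext : ∀ (n : ℕ) (u : Fin n → V), Function.Injective u →
      ∀ m : Fin n → ℕ, ∃ v : V, (∀ i, v ≠ u i) ∧ ∀ i, μ (u i) v = m i)
    (e : ℕ ≃ V) (v₁ v₂ : V) (n : ℕ) : RGood μ (rseq μ hsymm hirr hext e v₁ v₂ n) := by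
  induction n with
  | zero =>
    refine ⟨fun i j _ => Fin.ext (by omega), fun i j _ => Fin.ext (by omega),
      fun i j => ?_⟩
    simp only [rseq_zero]
    rw [hirr, hirr]
  | succ n ih =>
    rw [rseq_succ, rnext, dif_pos ih]
    exact (Classical.choose_spec (rextend μ hsymm hirr hext e n _ ih)).1

lemma rnext_eq (hsymm : ∀ x y, μ x y = μ y x) (hirr : ∀ x, μ x x = 0)
    (hext : ∀ (n : ℕ) (u : Fin n → V), Function.Injective u →
      ∀ m : Fin n → ℕ, ∃ v : V, (∀ i, v ≠ u i) ∧ ∀ i, μ (u i) v = m i)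
    (e : ℕ ≃ V) (v₁ v₂ : V) (n : ℕ) :
    rnext μ hsymm hirr hext e n (rseq μ hsymm hirr hext e v₁ v₂ n)
      = Classical.choose (rextend μ hsymm hirr hext e n _
          (rseq_good μ hsymm hirr hext e v₁ v₂ n)) := by
  rw [rnext, dif_pos (rseq_good μ hsymm hirr hext e v₁ v₂ n)]

lemma rseq_coh (hsymm : ∀ x y, μ x y = μ y x) (hirr : ∀ x, μ x x = 0)
    (hext : ∀ (n : ℕ) (u : Fin n → V), Function.Injective u →
      ∀ m : Fin n → ℕ, ∃ v : V, (∀ i, v ≠ u i) ∧ ∀ i, μ (u i) v = m i)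
    (e : ℕ ≃ V) (v₁ v₂ : V) : ∀ n i (h : i ≤ n),
    rseq μ hsymm hirr hext e v₁ v₂ n ⟨i, by omega⟩
      = rseq μ hsymm hirr hext e v₁ v₂ i (Fin.last i) := by
  intro n
  induction n with
  | zero =>
    intro i h
    interval_cases i
    rfl
  | succ n ih =>
    intro i h
    rcases Nat.lt_or_ge i (n + 1) with hi | hi
    · have hi' : i ≤ n := by omega
      have h2 : (⟨i, by omega⟩ : Fin (n + 2)) = Fin.castSucc ⟨i, by omega⟩ := rfl
      rw [rseq_succ, h2, Fin.snoc_castSucc]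
      exact ih i hi'
    · have : i = n + 1 := by omega
      subst this
      rfl

/-- The first coordinates of the diagonal of the back-and-forth sequence. -/
noncomputable def raseq (hsymm : ∀ x y, μ x y = μ y x) (hirr : ∀ x, μ x x = 0)
    (hext : ∀ (n : ℕ) (u : Fin n → V), Function.Injective u →
      ∀ m : Fin n → ℕ, ∃ v : V, (∀ i, v ≠ u i) ∧ ∀ i, μ (u i) v = m i)
    (e : ℕ ≃ V) (v₁ v₂ : V) (n : ℕ) : V := (rseq μ hsymm hirr hext e v₁ v₂ n (Fin.last n)).1

/-- The second coordinates of the diagonal of the back-and-forth sequence. -/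
noncomputable def rbseq (hsymm : ∀ x y, μ x y = μ y x) (hirr : ∀ x, μ x x = 0)
    (hext : ∀ (n : ℕ) (u : Fin n → V), Function.Injective u →
      ∀ m : Fin n → ℕ, ∃ v : V, (∀ i, v ≠ u i) ∧ ∀ i, μ (u i) v = m i)
    (e : ℕ ≃ V) (v₁ v₂ : V) (n : ℕ) : V := (rseq μ hsymm hirr hext e v₁ v₂ n (Fin.last n)).2

lemma rseq_fst (hsymm : ∀ x y, μ x y = μ y x) (hirr : ∀ x, μ x x = 0)
    (hext : ∀ (n : ℕ) (u : Fin n → V), Function.Injective u →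
      ∀ m : Fin n → ℕ, ∃ v : V, (∀ i, v ≠ u i) ∧ ∀ i, μ (u i) v = m i)
    (e : ℕ ≃ V) (v₁ v₂ : V) (n : ℕ) (i : Fin (n + 1)) :
    (rseq μ hsymm hirr hext e v₁ v₂ n i).1 = raseq μ hsymm hirr hext e v₁ v₂ i.val := by
  rw [raseq, ← rseq_coh μ hsymm hirr hext e v₁ v₂ n i.val (by omega)]

lemma rseq_snd (hsymm : ∀ x y, μ x y = μ y x) (hirr : ∀ x, μ x x = 0)
    (hext : ∀ (n : ℕ) (u : Fin n → V), Function.Injective u →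
      ∀ m : Fin n → ℕ, ∃ v : V, (∀ i, v ≠ u i) ∧ ∀ i, μ (u i) v = m i)
    (e : ℕ ≃ V) (v₁ v₂ : V) (n : ℕ) (i : Fin (n + 1)) :
    (rseq μ hsymm hirr hext e v₁ v₂ n i).2 = rbseq μ hsymm hirr hext e v₁ v₂ i.val := by
  rw [rbseq, ← rseq_coh μ hsymm hirr hext e v₁ v₂ n i.val (by omega)]

end RadoAux

/-- 1-transitivity of the Rado multigraph: any countable model of the Rado
multigraph axioms (encoded by its symmetric irreflexive multiplicity function
`μ` with the extension property) has, for any two vertices `v₁ v₂`, an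
automorphism sending `v₁` to `v₂`. -/
theorem rado_multigraph_one_transitive
    (V : Type) [Countable V] [Infinite V]
    (μ : V → V → ℕ) (hsymm : ∀ x y, μ x y = μ y x) (hirr : ∀ x, μ x x = 0)
    (hext : ∀ (n : ℕ) (u : Fin n → V), Function.Injective u →
      ∀ m : Fin n → ℕ, ∃ v : V, (∀ i, v ≠ u i) ∧ ∀ i, μ (u i) v = m i)
    (v₁ v₂ : V) :
    ∃ α : V ≃ V, (∀ x y, μ (α x) (α y) = μ x y) ∧ α v₁ = v₂ := by
  classical
  obtain ⟨d⟩ : Nonempty (Denumerable V) := nonempty_denumerable V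
  let e : ℕ ≃ V := (Denumerable.eqv V).symm
  have hgood := rseq_good μ hsymm hirr hext e v₁ v₂
  have ha := rseq_fst μ hsymm hirr hext e v₁ v₂
  have hb := rseq_snd μ hsymm hirr hext e v₁ v₂
  have ha0 : raseq μ hsymm hirr hext e v₁ v₂ 0 = v₁ := rfl
  have hb0 : rbseq μ hsymm hirr hext e v₁ v₂ 0 = v₂ := rfl
  have hμab : ∀ i j, μ (raseq μ hsymm hirr hext e v₁ v₂ i) (raseq μ hsymm hirr hext e v₁ v₂ j)
      = μ (rbseq μ hsymm hirr hext e v₁ v₂ i) (rbseq μ hsymm hirr hext e v₁ v₂ j) := by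
    intro i j
    rcases Nat.le_total i j with h | h
    · have key := (hgood j).2.2 ⟨i, by omega⟩ (Fin.last j)
      simp only [ha, hb, Fin.val_last, Fin.val_mk] at key
      exact key
    · have key := (hgood i).2.2 (Fin.last i) ⟨j, by omega⟩
      simp only [ha, hb, Fin.val_last, Fin.val_mk] at key
      exact key
  have hainj : Function.Injective (raseq μ hsymm hirr hext e v₁ v₂) := by
    intro i j hij
    rcases Nat.le_total i j with h | h
    · have h1 : (rseq μ hsymm hirr hext e v₁ v₂ j ⟨i, by omega⟩).1
          = (rseq μ hsymm hirr hext e v₁ v₂ j (Fin.last j)).1 := by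
        simp only [ha, Fin.val_last, Fin.val_mk]; exact hij
      have h2 := congrArg Fin.val ((hgood j).1 h1)
      simpa using h2
    · have h1 : (rseq μ hsymm hirr hext e v₁ v₂ i ⟨j, by omega⟩).1
          = (rseq μ hsymm hirr hext e v₁ v₂ i (Fin.last i)).1 := by
        simp only [ha, Fin.val_last, Fin.val_mk]; exact hij.symm
      have h2 := congrArg Fin.val ((hgood i).1 h1)
      simp only [Fin.val_last, Fin.val_mk] at h2
      omega
  have hbinj : Function.Injective (rbseq μ hsymm hirr hext e v₁ v₂) := by
    intro i j hij
    rcases Nat.le_total i j with h | h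
    · have h1 : (rseq μ hsymm hirr hext e v₁ v₂ j ⟨i, by omega⟩).2
          = (rseq μ hsymm hirr hext e v₁ v₂ j (Fin.last j)).2 := by
        simp only [hb, Fin.val_last, Fin.val_mk]; exact hij
      have h2 := congrArg Fin.val ((hgood j).2.1 h1)
      simpa using h2
    · have h1 : (rseq μ hsymm hirr hext e v₁ v₂ i ⟨j, by omega⟩).2
          = (rseq μ hsymm hirr hext e v₁ v₂ i (Fin.last i)).2 := by
        simp only [hb, Fin.val_last, Fin.val_mk]; exact hij.symm
      have h2 := congrArg Fin.val ((hgood i).2.1 h1)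
      simp only [Fin.val_last, Fin.val_mk] at h2
      omega
  have hasurj : Function.Surjective (raseq μ hsymm hirr hext e v₁ v₂) := by
    intro w
    obtain ⟨m, rfl⟩ := e.surjective w
    have spec := Classical.choose_spec (rextend μ hsymm hirr hext e (2 * m)
      (rseq μ hsymm hirr hext e v₁ v₂ (2 * m)) (hgood (2 * m)))
    obtain ⟨i, hi⟩ := spec.2.1 (by omega)
    have hm : e (2 * m / 2) = e m := by congr 1; omega
    refine ⟨i.val, ?_⟩
    have key : (rseq μ hsymm hirr hext e v₁ v₂ (2 * m + 1) i).1 = e m := by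
      rw [rseq_succ, rnext_eq]
      exact hi.trans hm
    rw [← ha (2 * m + 1) i]
    exact key
  have hbsurj : Function.Surjective (rbseq μ hsymm hirr hext e v₁ v₂) := by
    intro w
    obtain ⟨m, rfl⟩ := e.surjective w
    have spec := Classical.choose_spec (rextend μ hsymm hirr hext e (2 * m + 1)
      (rseq μ hsymm hirr hext e v₁ v₂ (2 * m + 1)) (hgood (2 * m + 1)))
    obtain ⟨i, hi⟩ := spec.2.2 (by omega)
    have hm : e ((2 * m + 1) / 2) = e m := by congr 1; omega
    refine ⟨i.val, ?_⟩
    have key : (rseq μ hsymm hirr hext e v₁ v₂ (2 * m + 2) i).2 = e m := by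
      rw [rseq_succ, rnext_eq]
      exact hi.trans hm
    rw [← hb (2 * m + 2) i]
    exact key
  let ea : ℕ ≃ V := Equiv.ofBijective _ ⟨hainj, hasurj⟩
  let eb : ℕ ≃ V := Equiv.ofBijective _ ⟨hbinj, hbsurj⟩
  refine ⟨ea.symm.trans eb, ?_, ?_⟩
  · intro x y
    have hx : raseq μ hsymm hirr hext e v₁ v₂ (ea.symm x) = x := ea.apply_symm_apply x
    have hy : raseq μ hsymm hirr hext e v₁ v₂ (ea.symm y) = y := ea.apply_symm_apply y
    calc μ (eb (ea.symm x)) (eb (ea.symm y))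
        = μ (rbseq μ hsymm hirr hext e v₁ v₂ (ea.symm x))
            (rbseq μ hsymm hirr hext e v₁ v₂ (ea.symm y)) := rfl
      _ = μ (raseq μ hsymm hirr hext e v₁ v₂ (ea.symm x))
            (raseq μ hsymm hirr hext e v₁ v₂ (ea.symm y)) := (hμab _ _).symm
      _ = μ x y := by rw [hx, hy]
  · have h1 : ea 0 = v₁ := ha0
    show eb (ea.symm v₁) = v₂
    rw [← h1, Equiv.symm_apply_apply]
    exact hb0
end

section
/- The Rado multigraph is ultrahomogeneous: any isomorphism between finite induced sub-multigraphs of a countable model of the Rado multigraph axioms extends to an automorphism of the whole structure. -/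
section RadoAux

variable {V : Type} [DecidableEq V] (μ : V → V → ℕ)

/-- A finite set of pairs is "good" if it is the graph of a partial
isomorphism: injective in both coordinates and multiplicity preserving. -/
def RadoGood (p : Finset (V × V)) : Prop :=
  ∀ a ∈ p, ∀ b ∈ p, (a.1 = b.1 ↔ a.2 = b.2) ∧ μ a.2 b.2 = μ a.1 b.1

lemma radoGood_swap {p : Finset (V × V)} (hp : RadoGood μ p) :
    RadoGood μ (p.image Prod.swap) := by
  intro a ha b hb
  simp only [Finset.mem_image] at ha hb
  obtain ⟨a', ha', rfl⟩ := ha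
  obtain ⟨b', hb', rfl⟩ := hb
  obtain ⟨h1, h2⟩ := hp a' ha' b' hb'
  exact ⟨h1.symm, h2.symm⟩

lemma radoGood_extend (hsymm : ∀ x y, μ x y = μ y x) (hirr : ∀ x, μ x x = 0)
    (hext : ∀ (n : ℕ) (u : Fin n → V), Function.Injective u →
      ∀ m : Fin n → ℕ, ∃ v : V, (∀ i, v ≠ u i) ∧ ∀ i, μ (u i) v = m i)
    {p : Finset (V × V)} (hp : RadoGood μ p) (w : V) :
    ∃ q, p ⊆ q ∧ RadoGood μ q ∧ w ∈ q.image Prod.fst := by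
  by_cases hw : w ∈ p.image Prod.fst
  · exact ⟨p, Finset.Subset.refl _, hp, hw⟩
  · have e : Fin p.card ≃ {x // x ∈ p} := (Finset.equivFin p).symm
    set u : Fin p.card → V := fun i => (e i).1.2 with hu_def
    have hu : Function.Injective u := by
      intro i j h
      apply e.injective
      have h2 := (hp (e i).1 (e i).2 (e j).1 (e j).2).1.mpr h
      exact Subtype.ext (Prod.ext h2 h)
    obtain ⟨v, hv1, hv2⟩ := hext p.card u hu (fun i => μ ((e i).1.1) w)
    have key : ∀ b ∈ p, w ≠ b.1 ∧ v ≠ b.2 ∧ μ v b.2 = μ w b.1 := by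
      intro b hb
      have hib : (e (e.symm ⟨b, hb⟩)).1 = b := by
        simp
      constructor
      · intro h; exact hw (Finset.mem_image.mpr ⟨b, hb, h.symm⟩)
      constructor
      · intro h
        exact hv1 (e.symm ⟨b, hb⟩) (by rw [hu_def]; simp only [hib]; exact h)
      · have := hv2 (e.symm ⟨b, hb⟩)
        rw [hu_def] at this
        simp only [hib] at this
        rw [hsymm v b.2, this, hsymm]
    refine ⟨insert (w, v) p, Finset.subset_insert _ _, ?_, ?_⟩
    · intro a ha b hb
      rcases Finset.mem_insert.mp ha with rfl | ha <;>
        rcases Finset.mem_insert.mp hb with rfl | hb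
      · exact ⟨iff_of_true rfl rfl, by rw [hirr, hirr]⟩
      · obtain ⟨k1, k2, k3⟩ := key b hb
        exact ⟨⟨fun h => absurd h k1, fun h => absurd h k2⟩, k3⟩
      · obtain ⟨k1, k2, k3⟩ := key a ha
        exact ⟨⟨fun h => absurd h.symm k1, fun h => absurd h.symm k2⟩,
          by rw [hsymm, k3, hsymm]⟩
      · exact hp a ha b hb
    · exact Finset.mem_image.mpr ⟨(w, v), Finset.mem_insert_self _ _, rfl⟩

lemma radoGood_step (hsymm : ∀ x y, μ x y = μ y x) (hirr : ∀ x, μ x x = 0)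
    (hext : ∀ (n : ℕ) (u : Fin n → V), Function.Injective u →
      ∀ m : Fin n → ℕ, ∃ v : V, (∀ i, v ≠ u i) ∧ ∀ i, μ (u i) v = m i)
    {p : Finset (V × V)} (hp : RadoGood μ p) (w : V) :
    ∃ q, p ⊆ q ∧ RadoGood μ q ∧ w ∈ q.image Prod.fst ∧ w ∈ q.image Prod.snd := by
  obtain ⟨q1, h1, hq1, hw1⟩ := radoGood_extend μ hsymm hirr hext hp w
  obtain ⟨q2, h2, hq2, hw2⟩ :=
    radoGood_extend μ hsymm hirr hext (radoGood_swap μ hq1) w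
  have swswap : ∀ (s : Finset (V × V)), (s.image Prod.swap).image Prod.swap = s := by
    intro s
    rw [Finset.image_image]
    simp [Function.comp]
  have hq1sub : q1 ⊆ q2.image Prod.swap := by
    rw [← swswap q1]
    exact Finset.image_subset_image h2
  refine ⟨q2.image Prod.swap, h1.trans hq1sub, radoGood_swap μ hq2, ?_, ?_⟩
  · exact Finset.image_subset_image hq1sub hw1
  · rw [Finset.image_image]
    have : (Prod.snd ∘ Prod.swap : V × V → V) = Prod.fst := rfl
    rw [this]
    exact hw2

end RadoAux

/-- Ultrahomogeneity of the Rado multigraph: any isomorphism `φ` between finite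
induced sub-multigraphs `A`, `B` of a countable model of the Rado multigraph
axioms extends to an automorphism of the whole structure. -/
theorem rado_multigraph_ultrahomogeneous
    (V : Type) [Countable V] [Infinite V]
    (μ : V → V → ℕ) (hsymm : ∀ x y, μ x y = μ y x) (hirr : ∀ x, μ x x = 0)
    (hext : ∀ (n : ℕ) (u : Fin n → V), Function.Injective u →
      ∀ m : Fin n → ℕ, ∃ v : V, (∀ i, v ≠ u i) ∧ ∀ i, μ (u i) v = m i)
    (A B : Finset V) (φ : {x // x ∈ A} ≃ {x // x ∈ B})
    (hφ : ∀ x y : {x // x ∈ A}, μ ((φ x) : V) ((φ y) : V) = μ (x : V) (y : V)) :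
    ∃ α : V ≃ V, (∀ x y, μ (α x) (α y) = μ x y) ∧
      ∀ a : {x // x ∈ A}, α (a : V) = ((φ a) : V) := by
  classical
  obtain ⟨d⟩ := nonempty_denumerable V
  let e : ℕ ≃ V := (Denumerable.eqv V).symm
  -- initial partial isomorphism
  let p0 : Finset (V × V) := A.attach.image (fun (a : {x // x ∈ A}) => ((a : V), ((φ a) : V)))
  have hp0 : RadoGood μ p0 := by
    intro x hx y hy
    simp only [p0, Finset.mem_image, Finset.mem_attach, true_and] at hx hy
    obtain ⟨a, _, rfl⟩ := hx
    obtain ⟨b, _, rfl⟩ := hy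
    refine ⟨⟨fun h => ?_, fun h => ?_⟩, hφ a b⟩
    · have : a = b := Subtype.ext h
      rw [this]
    · have : φ a = φ b := Subtype.ext h
      have : a = b := φ.injective this
      rw [this]
  -- back-and-forth chain
  choose step hstep1 hstep2 hstep3 hstep4 using
    fun (p : Finset (V × V)) (hp : RadoGood μ p) (w : V) =>
      radoGood_step μ hsymm hirr hext hp w
  let P : ℕ → {p : Finset (V × V) // RadoGood μ p} := fun n =>
    Nat.rec ⟨p0, hp0⟩ (fun k q => ⟨step q.1 q.2 (e k), hstep2 q.1 q.2 (e k)⟩) n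
  have Pstep : ∀ k, (P k).1 ⊆ (P (k + 1)).1 := fun k => hstep1 (P k).1 (P k).2 (e k)
  have mono : ∀ j k, j ≤ k → (P j).1 ⊆ (P k).1 := by
    intro j k h
    induction h with
    | refl => exact Finset.Subset.refl _
    | step _ ih => exact ih.trans (Pstep _)
  -- the union relation
  set R : V → V → Prop := fun x y => ∃ k, (x, y) ∈ (P k).1 with hR
  have uniq_snd : ∀ {x y y'}, R x y → R x y' → y = y' := by
    rintro x y y' ⟨j, hj⟩ ⟨k, hk⟩
    have h1 := mono j (max j k) (le_max_left _ _) hj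
    have h2 := mono k (max j k) (le_max_right _ _) hk
    exact ((P (max j k)).2 _ h1 _ h2).1.mp rfl
  have uniq_fst : ∀ {x x' y}, R x y → R x' y → x = x' := by
    rintro x x' y ⟨j, hj⟩ ⟨k, hk⟩
    have h1 := mono j (max j k) (le_max_left _ _) hj
    have h2 := mono k (max j k) (le_max_right _ _) hk
    exact ((P (max j k)).2 _ h1 _ h2).1.mpr rfl
  have totalF : ∀ x, ∃ y, R x y := by
    intro x
    have hx := hstep3 (P (e.symm x)).1 (P (e.symm x)).2 (e (e.symm x))
    rw [Finset.mem_image] at hx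
    obtain ⟨⟨x', y⟩, hmem, hfst⟩ := hx
    refine ⟨y, e.symm x + 1, ?_⟩
    have : (e (e.symm x) : V) = x := e.apply_symm_apply x
    rw [this] at hfst
    cases hfst
    exact hmem
  have totalG : ∀ y, ∃ x, R x y := by
    intro y
    have hy := hstep4 (P (e.symm y)).1 (P (e.symm y)).2 (e (e.symm y))
    rw [Finset.mem_image] at hy
    obtain ⟨⟨x, y'⟩, hmem, hsnd⟩ := hy
    refine ⟨x, e.symm y + 1, ?_⟩
    have : (e (e.symm y) : V) = y := e.apply_symm_apply y
    rw [this] at hsnd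
    cases hsnd
    exact hmem
  choose f hf using totalF
  choose g hg using totalG
  have hgf : Function.LeftInverse g f := by
    intro x
    exact uniq_fst (hg (f x)) (hf x)
  have hfg : Function.RightInverse g f := by
    intro y
    exact uniq_snd (hf (g y)) (hg y)
  refine ⟨⟨f, g, hgf, hfg⟩, ?_, ?_⟩
  · intro x y
    obtain ⟨j, hj⟩ := hf x
    obtain ⟨k, hk⟩ := hf y
    have h1 := mono j (max j k) (le_max_left _ _) hj
    have h2 := mono k (max j k) (le_max_right _ _) hk
    exact ((P (max j k)).2 _ h1 _ h2).2
  · intro a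
    have h0 : R (a : V) ((φ a) : V) := by
      refine ⟨0, ?_⟩
      simp only [P, p0]
      exact Finset.mem_image.mpr ⟨a, Finset.mem_attach _ _, rfl⟩
    exact uniq_snd (hf (a : V)) h0
end

section
/- Let f : ℕ → ℕ with partial sums F(t) = ∑_{i=0}^{t-1} f(i), extended to ℝ≥0 as step functions. Suppose ∑_{s=0}^{∞} (f(s)/F(s))² < ∞. Then for every real β ≥ 1 there exists K_β > 0 such that for all integers t ≥ m ≥ 0, |∫_m^t f(s)/F(s)^β ds − ∑_{s=m}^{t} f(s)/F(s)^β| < K_β. -/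
open Finset intervalIntegral

lemma aux_rpow_inv_sub_le {β a b : ℝ} (hβ : 1 ≤ β) (ha : 1 ≤ a) (hab : a ≤ b) :
    1 / a ^ β - 1 / b ^ β ≤ β * (b - a) / a ^ 2 := by
  have ha0 : (0:ℝ) < a := lt_of_lt_of_le one_pos ha
  rcases eq_or_lt_of_le hab with rfl | hlt
  · simp
  · have hcont : ContinuousOn (fun x : ℝ => x ^ (-β)) (Set.Icc a b) := by
      apply ContinuousOn.rpow_const continuousOn_id
      intro x hx
      exact Or.inl (ne_of_gt (lt_of_lt_of_le ha0 hx.1))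
    have hderiv : ∀ x ∈ Set.Ioo a b, HasDerivAt (fun x : ℝ => x ^ (-β))
        ((-β) * x ^ (-β - 1)) x := by
      intro x hx
      exact Real.hasDerivAt_rpow_const (Or.inl (ne_of_gt (lt_trans ha0 hx.1)))
    obtain ⟨c, hc, hslope⟩ := exists_hasDerivAt_eq_slope _ _ hlt hcont hderiv
    have hc0 : 0 < c := lt_trans ha0 hc.1
    have hkey : a ^ (-β) - b ^ (-β) = β * c ^ (-β - 1) * (b - a) := by
      have hba : b - a ≠ 0 := sub_ne_zero.2 (ne_of_gt hlt)
      field_simp at hslope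
      nlinarith [hslope]
    have hc2 : c ^ (-β - 1) ≤ (a ^ 2)⁻¹ := by
      have h1 : a ^ ((2:ℕ):ℝ) ≤ c ^ (β + 1) := by
        calc a ^ ((2:ℕ):ℝ) ≤ a ^ (β + 1) :=
              Real.rpow_le_rpow_of_exponent_le ha (by push_cast; linarith)
          _ ≤ c ^ (β + 1) := Real.rpow_le_rpow ha0.le hc.1.le (by linarith)
      rw [Real.rpow_natCast] at h1
      have : c ^ (-β - 1) = (c ^ (β + 1))⁻¹ := by
        rw [← Real.rpow_neg hc0.le]; ring_nf
      rw [this]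
      exact inv_anti₀ (by positivity) h1
    have hra : a ^ (-β) = 1 / a ^ β := by rw [Real.rpow_neg ha0.le, one_div]
    have hrb : b ^ (-β) = 1 / b ^ β := by
      rw [Real.rpow_neg (lt_of_lt_of_le ha0 hab).le, one_div]
    rw [← hra, ← hrb, hkey, div_eq_mul_inv, mul_assoc]
    have hβ0 : 0 ≤ β := le_trans zero_le_one hβ
    have hba0 : 0 ≤ b - a := by linarith
    calc β * (c ^ (-β - 1) * (b - a)) ≤ β * ((a ^ 2)⁻¹ * (b - a)) := by
          apply mul_le_mul_of_nonneg_left _ hβ0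
          exact mul_le_mul_of_nonneg_right hc2 hba0
      _ = β * (b - a) * (a ^ 2)⁻¹ := by ring

/-- Integral–sum comparison (Lemma `lem:integral`): if `∑ (f(s)/F(s))² < ∞`,
where `F(t) = ∑_{i<t} f(i)` (extended to real arguments as a step function, with
`F` its antiderivative), then for every `β ≥ 1` there is `K_β > 0` bounding the
difference between `∫_m^t f(s)/F(s)^β ds` and `∑_{s=m}^t f(s)/F(s)^β`,
uniformly over all `t ≥ m` in the range where `F` is positive. -/
theorem integral_sum_comparison
    (f : ℕ → ℕ) (hf0 : 1 ≤ f 0)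
    (F : ℕ → ℕ) (hF : ∀ t, F t = ∑ i ∈ Finset.range t, f i)
    (fR : ℝ → ℝ) (hfR : ∀ s : ℝ, 0 ≤ s → fR s = f ⌊s⌋₊)
    (FR : ℝ → ℝ) (hFR : ∀ t : ℝ, 0 ≤ t → FR t = ∫ s in (0:ℝ)..t, fR s)
    (hsum : Summable (fun s => ((f s : ℝ) / (F s : ℝ)) ^ 2)) :
    ∀ β : ℝ, 1 ≤ β → ∃ K : ℝ, 0 < K ∧ ∀ m t : ℕ, 1 ≤ m → m ≤ t →
      |(∫ s in (m : ℝ)..(t : ℝ), fR s / (FR s) ^ β)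
        - ∑ s ∈ Finset.Icc m t, (f s : ℝ) / (F s : ℝ) ^ β| < K := by
  intro β hβ
  have hβ0 : (0:ℝ) < β := lt_of_lt_of_le one_pos hβ
  -- basic facts about F
  have h1F : ∀ n : ℕ, 1 ≤ n → (1:ℝ) ≤ (F n : ℝ) := by
    intro n hn
    have : 1 ≤ F n := by
      rw [hF]
      calc 1 ≤ f 0 := hf0
        _ ≤ ∑ i ∈ Finset.range n, f i :=
          Finset.single_le_sum (fun i _ => Nat.zero_le _) (Finset.mem_range.2 hn)
    exact_mod_cast this
  have hfn0 : ∀ n : ℕ, (0:ℝ) ≤ (f n : ℝ) := fun n => Nat.cast_nonneg _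
  have hFsucc : ∀ n : ℕ, (F (n+1) : ℝ) = (F n : ℝ) + (f n : ℝ) := by
    intro n; rw [hF (n+1), hF n, Finset.sum_range_succ]; push_cast; ring
  -- floor facts
  have hfloor : ∀ (n : ℕ) (s : ℝ), (n:ℝ) ≤ s → s < (n:ℝ) + 1 → fR s = (f n : ℝ) := by
    intro n s h1 h2
    have hs0 : (0:ℝ) ≤ s := le_trans (Nat.cast_nonneg n) h1
    rw [hfR s hs0]
    congr 2
    rw [Nat.floor_eq_iff hs0]
    exact ⟨h1, by push_cast; linarith⟩
  -- a.e. constancy of fR on [n, b] for b ≤ n+1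
  have hfae : ∀ (n : ℕ) (b : ℝ), (n:ℝ) ≤ b → b ≤ (n:ℝ) + 1 →
      ∀ᵐ x ∂MeasureTheory.volume, x ∈ Set.uIoc (n:ℝ) b → fR x = (f n : ℝ) := by
    intro n b hnb hb1
    have hsing : MeasureTheory.volume ({(n:ℝ) + 1} : Set ℝ) = 0 :=
      MeasureTheory.measure_singleton _
    filter_upwards [MeasureTheory.compl_mem_ae_iff.2 hsing] with x hx hmem
    rw [Set.uIoc_of_le hnb] at hmem
    exact hfloor n x hmem.1.le (lt_of_le_of_ne (le_trans hmem.2 hb1) hx)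
  have hfint : ∀ (n : ℕ) (b : ℝ), (n:ℝ) ≤ b → b ≤ (n:ℝ) + 1 →
      IntervalIntegrable fR MeasureTheory.volume n b := by
    intro n b hnb hb1
    have h := (MeasureTheory.ae_restrict_iff' measurableSet_uIoc).2 (hfae n b hnb hb1)
    exact (_root_.intervalIntegrable_const (c := (f n : ℝ))).congr_ae (h.mono fun x hx => hx.symm)
  have hfval : ∀ (n : ℕ) (b : ℝ), (n:ℝ) ≤ b → b ≤ (n:ℝ) + 1 →
      (∫ x in (n:ℝ)..b, fR x) = (f n : ℝ) * (b - n) := by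
    intro n b hnb hb1
    rw [intervalIntegral.integral_congr_ae (hfae n b hnb hb1),
      intervalIntegral.integral_const, smul_eq_mul]
    ring
  have hfint0 : ∀ n : ℕ, IntervalIntegrable fR MeasureTheory.volume 0 (n:ℝ) := by
    intro n
    have h := IntervalIntegrable.trans_iterate (f := fR) (μ := MeasureTheory.volume)
      (a := fun k : ℕ => (k:ℝ)) (n := n) (fun k _ => by
        push_cast
        exact hfint k ((k:ℝ)+1) (by linarith) le_rfl)
    simpa using h
  have hInt0n : ∀ n : ℕ, (∫ x in (0:ℝ)..(n:ℝ), fR x) = (F n : ℝ) := by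
    intro n
    have h := intervalIntegral.sum_integral_adjacent_intervals
      (μ := MeasureTheory.volume) (f := fR) (a := fun k : ℕ => (k:ℝ)) (n := n)
      (fun k _ => by push_cast; exact hfint k ((k:ℝ)+1) (by linarith) le_rfl)
    simp only [Nat.cast_zero] at h
    rw [← h, hF]
    push_cast
    refine Finset.sum_congr rfl fun k _ => ?_
    push_cast
    rw [hfval k ((k:ℝ)+1) (by linarith) le_rfl]
    ring
  have hFRval : ∀ (n : ℕ) (s : ℝ), (n:ℝ) ≤ s → s ≤ (n:ℝ)+1 →
      FR s = (F n : ℝ) + (f n : ℝ) * (s - n) := by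
    intro n s h1 h2
    have hs0 : (0:ℝ) ≤ s := le_trans (Nat.cast_nonneg n) h1
    rw [hFR s hs0,
      ← intervalIntegral.integral_add_adjacent_intervals (hfint0 n) (hfint n s h1 h2),
      hInt0n n, hfval n s h1 h2]
  -- per-interval analysis
  have hdenpos : ∀ (n : ℕ), 1 ≤ n → ∀ x ∈ Set.Icc (n:ℝ) ((n:ℝ)+1),
      (1:ℝ) ≤ (F n:ℝ) + (f n:ℝ) * (x - n) := by
    intro n hn x hx
    have h1 := h1F n hn
    have h2 := hfn0 n
    nlinarith [hx.1, hx.2]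
  have hhint : ∀ (n : ℕ), 1 ≤ n →
      IntervalIntegrable (fun x : ℝ => (f n:ℝ) / ((F n:ℝ) + (f n:ℝ) * (x - n)) ^ β)
        MeasureTheory.volume (n:ℝ) ((n:ℝ)+1) := by
    intro n hn
    apply ContinuousOn.intervalIntegrable
    rw [Set.uIcc_of_le (by linarith : (n:ℝ) ≤ (n:ℝ)+1)]
    have hbase : ContinuousOn (fun x : ℝ => (F n:ℝ) + (f n:ℝ) * (x - n))
        (Set.Icc (n:ℝ) ((n:ℝ)+1)) := by fun_prop
    apply ContinuousOn.div continuousOn_const (hbase.rpow_const ?_) ?_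
    · intro x hx
      exact Or.inl (by nlinarith [hdenpos n hn x hx])
    · intro x hx
      exact ne_of_gt (Real.rpow_pos_of_pos (by nlinarith [hdenpos n hn x hx]) β)
  have haeg : ∀ (n : ℕ), 1 ≤ n →
      ∀ᵐ x ∂MeasureTheory.volume, x ∈ Set.uIoc (n:ℝ) ((n:ℝ)+1) →
        fR x / FR x ^ β = (f n:ℝ) / ((F n:ℝ) + (f n:ℝ) * (x - n)) ^ β := by
    intro n hn
    filter_upwards [hfae n ((n:ℝ)+1) (by linarith) le_rfl] with x hx hmem
    have hmem' := hmem
    rw [Set.uIoc_of_le (by linarith : (n:ℝ) ≤ (n:ℝ)+1)] at hmem'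
    rw [hx hmem, hFRval n x hmem'.1.le hmem'.2]
  have hgint : ∀ (n : ℕ), 1 ≤ n →
      IntervalIntegrable (fun s : ℝ => fR s / FR s ^ β)
        MeasureTheory.volume (n:ℝ) ((n:ℝ)+1) := by
    intro n hn
    exact (hhint n hn).congr_ae ((MeasureTheory.ae_restrict_iff' measurableSet_uIoc).2
      ((haeg n hn).mono fun x hx hmem => (hx hmem).symm))
  have hIub : ∀ (n : ℕ), 1 ≤ n →
      (∫ s in (n:ℝ)..((n:ℝ)+1), fR s / FR s ^ β) ≤ (f n:ℝ) / (F n:ℝ) ^ β := by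
    intro n hn
    rw [intervalIntegral.integral_congr_ae (haeg n hn)]
    have hmono := intervalIntegral.integral_mono_on
      (by linarith : (n:ℝ) ≤ (n:ℝ)+1) (hhint n hn)
      (_root_.intervalIntegrable_const (c := (f n:ℝ) / (F n:ℝ) ^ β))
      (fun x hx => by
        have hd := hdenpos n hn x hx
        have hFx := h1F n hn
        have h2 := mul_nonneg (hfn0 n) (sub_nonneg.2 hx.1)
        gcongr
        linarith)
    simpa using hmono
  have hIlb : ∀ (n : ℕ), 1 ≤ n →
      (f n:ℝ) / (F (n+1):ℝ) ^ β ≤ (∫ s in (n:ℝ)..((n:ℝ)+1), fR s / FR s ^ β) := by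
    intro n hn
    rw [intervalIntegral.integral_congr_ae (haeg n hn)]
    have hmono := intervalIntegral.integral_mono_on
      (by linarith : (n:ℝ) ≤ (n:ℝ)+1)
      (_root_.intervalIntegrable_const (c := (f n:ℝ) / (F (n+1):ℝ) ^ β))
      (hhint n hn)
      (fun x hx => by
        have hd := hdenpos n hn x hx
        have hFx := h1F n hn
        have h2 : (f n:ℝ) * (x - n) ≤ (f n:ℝ) * 1 :=
          mul_le_mul_of_nonneg_left (by linarith [hx.2]) (hfn0 n)
        gcongr
        rw [hFsucc n]
        linarith)
    simpa using hmono
  have hterm : ∀ (n : ℕ), 1 ≤ n →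
      0 ≤ (f n:ℝ) / (F n:ℝ) ^ β - (∫ s in (n:ℝ)..((n:ℝ)+1), fR s / FR s ^ β) ∧
      (f n:ℝ) / (F n:ℝ) ^ β - (∫ s in (n:ℝ)..((n:ℝ)+1), fR s / FR s ^ β)
        ≤ β * ((f n:ℝ) / (F n:ℝ)) ^ 2 := by
    intro n hn
    have h1 := hIub n hn
    have h2 := hIlb n hn
    refine ⟨by linarith, ?_⟩
    have haux := aux_rpow_inv_sub_le (a := (F n:ℝ)) (b := (F (n+1):ℝ)) hβ (h1F n hn)
      (by rw [hFsucc n]; linarith [hfn0 n])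
    have h3 := mul_le_mul_of_nonneg_left haux (hfn0 n)
    have hFne : (F n:ℝ) ≠ 0 := by have := h1F n hn; linarith
    have e1 : (f n:ℝ) * (β * ((F (n+1):ℝ) - (F n:ℝ)) / (F n:ℝ) ^ 2)
        = β * ((f n:ℝ) / (F n:ℝ)) ^ 2 := by
      rw [hFsucc n]
      field_simp
      ring
    calc (f n:ℝ) / (F n:ℝ) ^ β - (∫ s in (n:ℝ)..((n:ℝ)+1), fR s / FR s ^ β)
        ≤ (f n:ℝ) / (F n:ℝ) ^ β - (f n:ℝ) / (F (n+1):ℝ) ^ β := by linarith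
      _ = (f n:ℝ) * (1 / (F n:ℝ) ^ β - 1 / (F (n+1):ℝ) ^ β) := by
          rw [mul_sub, mul_one_div, mul_one_div]
      _ ≤ (f n:ℝ) * (β * ((F (n+1):ℝ) - (F n:ℝ)) / (F n:ℝ) ^ 2) := h3
      _ = β * ((f n:ℝ) / (F n:ℝ)) ^ 2 := e1
  -- final bound
  set C := ∑' s, ((f s:ℝ) / (F s:ℝ)) ^ 2 with hCdef
  have hC0 : 0 ≤ C := tsum_nonneg fun s => sq_nonneg _
  refine ⟨β * C + Real.sqrt C + 1, by positivity, ?_⟩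
  intro m t hm hmt
  have h1t : 1 ≤ t := le_trans hm hmt
  have htel : (∫ s in (m:ℝ)..(t:ℝ), fR s / FR s ^ β)
      = ∑ n ∈ Finset.Ico m t, ∫ s in (n:ℝ)..((n:ℝ)+1), fR s / FR s ^ β := by
    rw [← intervalIntegral.sum_integral_adjacent_intervals_Ico
      (a := fun k : ℕ => (k:ℝ)) hmt
      (fun k hk => by
        push_cast
        exact hgint k (le_trans hm hk.1))]
    exact Finset.sum_congr rfl fun k _ => by push_cast; ring_nf
  have hsplit : ∑ s ∈ Finset.Icc m t, (f s:ℝ) / (F s:ℝ) ^ β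
      = (∑ n ∈ Finset.Ico m t, (f n:ℝ) / (F n:ℝ) ^ β) + (f t:ℝ) / (F t:ℝ) ^ β := by
    rw [← Finset.Ico_add_one_right_eq_Icc, Finset.sum_Ico_succ_top hmt]
  have hat0 : 0 ≤ (f t:ℝ) / (F t:ℝ) ^ β :=
    div_nonneg (hfn0 t) (Real.rpow_nonneg (Nat.cast_nonneg _) β)
  have hat : (f t:ℝ) / (F t:ℝ) ^ β ≤ Real.sqrt C := by
    have h2 : ((f t:ℝ) / (F t:ℝ)) ^ 2 ≤ C := Summable.le_tsum hsum t fun j _ => sq_nonneg _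
    have h3 : (f t:ℝ) / (F t:ℝ) ≤ Real.sqrt C := by
      have := Real.sqrt_le_sqrt h2
      rwa [Real.sqrt_sq (div_nonneg (hfn0 t) (by linarith [h1F t h1t]))] at this
    have h5 : (F t:ℝ) ≤ (F t:ℝ) ^ β := by
      nth_rewrite 1 [← Real.rpow_one (F t:ℝ)]
      exact Real.rpow_le_rpow_of_exponent_le (h1F t h1t) hβ
    have h4 : (f t:ℝ) / (F t:ℝ) ^ β ≤ (f t:ℝ) / (F t:ℝ) := by
      gcongr
      all_goals first
        | exact h5
        | linarith [h1F t h1t]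
    linarith
  have hterms := fun n (hn : n ∈ Finset.Ico m t) =>
    hterm n (le_trans hm (Finset.mem_Ico.1 hn).1)
  have hD1 : 0 ≤ ∑ n ∈ Finset.Ico m t,
      ((f n:ℝ) / (F n:ℝ) ^ β - ∫ s in (n:ℝ)..((n:ℝ)+1), fR s / FR s ^ β) :=
    Finset.sum_nonneg fun n hn => (hterms n hn).1
  have hsum_le : ∑ n ∈ Finset.Ico m t, ((f n:ℝ) / (F n:ℝ)) ^ 2 ≤ C :=
    Summable.sum_le_tsum _ (fun i _ => sq_nonneg _) hsum
  have hD2 : ∑ n ∈ Finset.Ico m t,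
      ((f n:ℝ) / (F n:ℝ) ^ β - ∫ s in (n:ℝ)..((n:ℝ)+1), fR s / FR s ^ β) ≤ β * C := by
    calc ∑ n ∈ Finset.Ico m t,
        ((f n:ℝ) / (F n:ℝ) ^ β - ∫ s in (n:ℝ)..((n:ℝ)+1), fR s / FR s ^ β)
        ≤ ∑ n ∈ Finset.Ico m t, β * ((f n:ℝ) / (F n:ℝ)) ^ 2 :=
          Finset.sum_le_sum fun n hn => (hterms n hn).2
      _ = β * ∑ n ∈ Finset.Ico m t, ((f n:ℝ) / (F n:ℝ)) ^ 2 := by rw [Finset.mul_sum]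
      _ ≤ β * C := mul_le_mul_of_nonneg_left hsum_le hβ0.le
  have hDeq : (∑ s ∈ Finset.Icc m t, (f s:ℝ) / (F s:ℝ) ^ β)
        - (∫ s in (m:ℝ)..(t:ℝ), fR s / FR s ^ β)
      = (∑ n ∈ Finset.Ico m t,
          ((f n:ℝ) / (F n:ℝ) ^ β - ∫ s in (n:ℝ)..((n:ℝ)+1), fR s / FR s ^ β))
        + (f t:ℝ) / (F t:ℝ) ^ β := by
    rw [htel, hsplit, Finset.sum_sub_distrib]
    ring
  rw [abs_sub_comm]
  have hnn : 0 ≤ (∑ s ∈ Finset.Icc m t, (f s:ℝ) / (F s:ℝ) ^ β)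
      - (∫ s in (m:ℝ)..(t:ℝ), fR s / FR s ^ β) := by
    rw [hDeq]; linarith
  rw [abs_of_nonneg hnn, hDeq]
  linarith
end

section
/- Suppose ∑_s (f(s)/F(s))² < ∞ where F(t) = ∑_{i<t} f(i) > 0. Then A(t) := ∏_{j=1}^{t-1} (1 + f(j)/(2F(j))) satisfies A(t) = Θ(F(t)^{1/2}): there are constants 0 < c ≤ C such that c·F(t)^{1/2} ≤ A(t) ≤ C·F(t)^{1/2} for all large t. -/
/-- Growth of the normalising constants (Proposition `prop:xuexists` (ii)):
if `∑ (f(s)/F(s))² < ∞` with `F(t) = ∑_{i<t} f(i) > 0` for `t ≥ 1`, then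
`A(t) = ∏_{j=1}^{t-1}(1 + f(j)/(2F(j)))` satisfies `A(t) = Θ(F(t)^{1/2})`. -/
theorem mpa_normaliser_growth
    (f : ℕ → ℕ) (F : ℕ → ℕ) (hF : ∀ t, F t = ∑ i ∈ Finset.range t, f i)
    (hFpos : ∀ t, 1 ≤ t → 0 < F t)
    (hsum : Summable fun s => ((f s : ℝ) / (F s : ℝ)) ^ 2) :
    ∃ c C : ℝ, 0 < c ∧ c ≤ C ∧ ∃ N : ℕ, ∀ t, N ≤ t →
      c * Real.sqrt (F t) ≤ ∏ j ∈ Finset.Ico 1 t, (1 + (f j : ℝ) / (2 * F j)) ∧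
      (∏ j ∈ Finset.Ico 1 t, (1 + (f j : ℝ) / (2 * F j))) ≤ C * Real.sqrt (F t) := by
  set x : ℕ → ℝ := fun j => (f j : ℝ) / (F j : ℝ) with hx
  have hxnn : ∀ j, 0 ≤ x j := fun j => div_nonneg (Nat.cast_nonneg _) (Nat.cast_nonneg _)
  have hF1 : (0:ℝ) < F 1 := by exact_mod_cast hFpos 1 le_rfl
  set S : ℝ := ∑' s, (x s) ^ 2 with hS
  have hSnn : 0 ≤ S := tsum_nonneg fun s => sq_nonneg _
  -- telescoping product
  have tele : ∀ t, 1 ≤ t → ∏ j ∈ Finset.Ico 1 t, (1 + x j) = (F t : ℝ) / F 1 := by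
    intro t ht
    induction t, ht using Nat.le_induction with
    | base => simp [div_self hF1.ne']
    | succ n hn ih =>
      rw [Finset.prod_Ico_succ_top hn, ih]
      have hFn : (0:ℝ) < F n := by exact_mod_cast hFpos n hn
      have hstep : (F (n+1) : ℝ) = F n + f n := by
        rw [hF (n+1), hF n]; push_cast [Finset.sum_range_succ]; ring
      rw [hx]
      field_simp
      rw [hstep]
  -- the squared product identity
  have hA2 : ∀ t, (∏ j ∈ Finset.Ico 1 t, (1 + (f j : ℝ) / (2 * F j))) ^ 2
      = (∏ j ∈ Finset.Ico 1 t, (1 + x j)) *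
        ∏ j ∈ Finset.Ico 1 t, (1 + (x j) ^ 2 / (4 * (1 + x j))) := by
    intro t
    rw [← Finset.prod_mul_distrib, ← Finset.prod_pow]
    refine Finset.prod_congr rfl fun j _ => ?_
    have h1 : (0:ℝ) < 1 + x j := by linarith [hxnn j]
    have hxj : (f j : ℝ) / (2 * F j) = x j / 2 := by rw [hx]; ring
    rw [hxj]
    field_simp
    ring
  -- bounds on the correction product
  have hgnn : ∀ j, 0 ≤ (x j) ^ 2 / (4 * (1 + x j)) := fun j =>
    div_nonneg (sq_nonneg _) (by nlinarith [hxnn j])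
  have hP1 : ∀ t, (1:ℝ) ≤ ∏ j ∈ Finset.Ico 1 t, (1 + (x j) ^ 2 / (4 * (1 + x j))) := by
    intro t
    calc (1:ℝ) = ∏ _j ∈ Finset.Ico 1 t, (1:ℝ) := by simp
      _ ≤ _ := Finset.prod_le_prod (fun j _ => zero_le_one) (fun j _ => by linarith [hgnn j])
  have hPle : ∀ t, (∏ j ∈ Finset.Ico 1 t, (1 + (x j) ^ 2 / (4 * (1 + x j))))
      ≤ Real.exp (S / 4) := by
    intro t
    calc ∏ j ∈ Finset.Ico 1 t, (1 + (x j) ^ 2 / (4 * (1 + x j)))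
        ≤ ∏ j ∈ Finset.Ico 1 t, Real.exp ((x j) ^ 2 / 4) := by
          refine Finset.prod_le_prod (fun j _ => by linarith [hgnn j]) (fun j _ => ?_)
          have h1 : (0:ℝ) < 1 + x j := by linarith [hxnn j]
          have h2 : (x j) ^ 2 / (4 * (1 + x j)) ≤ (x j) ^ 2 / 4 := by
            apply div_le_div_of_nonneg_left (sq_nonneg _) (by norm_num)
            nlinarith [hxnn j, sq_nonneg (x j)]
          have h3 : 1 + (x j) ^ 2 / 4 ≤ Real.exp ((x j) ^ 2 / 4) := by
            have := Real.add_one_le_exp ((x j) ^ 2 / 4); linarith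
          linarith
      _ = Real.exp (∑ j ∈ Finset.Ico 1 t, (x j) ^ 2 / 4) := by rw [Real.exp_sum]
      _ ≤ Real.exp (S / 4) := by
          apply Real.exp_le_exp.mpr
          rw [← Finset.sum_div]
          have : ∑ j ∈ Finset.Ico 1 t, (x j) ^ 2 ≤ S :=
            Summable.sum_le_tsum _ (fun i _ => sq_nonneg _) hsum
          linarith
  refine ⟨Real.sqrt (1 / F 1), Real.sqrt (Real.exp (S / 4) / F 1),
    Real.sqrt_pos.mpr (by positivity), Real.sqrt_le_sqrt (by
      gcongr
      have := Real.add_one_le_exp (S / 4); nlinarith), 1, fun t ht => ?_⟩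
  have hFt : (0:ℝ) < F t := by exact_mod_cast hFpos t ht
  set A : ℝ := ∏ j ∈ Finset.Ico 1 t, (1 + (f j : ℝ) / (2 * F j)) with hA
  set P : ℝ := ∏ j ∈ Finset.Ico 1 t, (1 + (x j) ^ 2 / (4 * (1 + x j))) with hP
  have hAnn : 0 ≤ A := Finset.prod_nonneg fun j _ => by positivity
  have hPnn : (0:ℝ) < P := lt_of_lt_of_le one_pos (hP1 t)
  have hAeq : A = Real.sqrt (F t) * Real.sqrt (P / F 1) := by
    have h1 : A ^ 2 = (F t : ℝ) * (P / F 1) := by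
      rw [hA2 t, tele t ht, ← hP, div_mul_eq_mul_div, mul_div_assoc]
    have : A = Real.sqrt (A ^ 2) := (Real.sqrt_sq hAnn).symm
    rw [this, h1, Real.sqrt_mul (Nat.cast_nonneg _)]
  constructor
  · rw [hAeq, mul_comm]
    have h := Real.sqrt_le_sqrt (show (1:ℝ) / F 1 ≤ P / F 1 by gcongr; exact hP1 t)
    nlinarith [Real.sqrt_nonneg ((F t : ℝ)), Real.sqrt_nonneg ((1:ℝ) / F 1)]
  · rw [hAeq, mul_comm (Real.sqrt (Real.exp (S / 4) / F 1))]
    have h := Real.sqrt_le_sqrt (show P / F 1 ≤ Real.exp (S / 4) / F 1 by gcongr; exact hPle t)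
    nlinarith [Real.sqrt_nonneg ((F t : ℝ)), Real.sqrt_nonneg (P / (F 1 : ℝ))]
end

section
/- Under the assumption ∑_s (f(s)/F(s))² < ∞, in MPA_f the martingale X(t) = d_u(t)/A(t) converges almost surely to a finite nonnegative random variable, and consequently there exists a random x_u ≥ 0 with d_u(t)/F(t)^{1/2} converging to a finite limit proportional to x_u. -/
open MeasureTheory Filter
open scoped ENNReal

private lemma A_theta (f F : ℕ → ℕ) (hF : ∀ t, F t = ∑ i ∈ Finset.range t, f i)
    (hFpos : ∀ t, 1 ≤ t → 0 < F t)
    (hsum : Summable fun s => ((f s : ℝ) / (F s : ℝ)) ^ 2)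
    (A : ℕ → ℝ)
    (hA : ∀ t, A t = ∏ j ∈ Finset.Ico 1 t, (1 + (f j : ℝ) / (2 * F j))) :
    ∃ c C : ℝ, 0 < c ∧ c ≤ C ∧ ∀ t, 1 ≤ t →
      c * Real.sqrt (F t) ≤ A t ∧ A t ≤ C * Real.sqrt (F t) := by
  have hF1 : (0:ℝ) < (F 1 : ℝ) := by exact_mod_cast hFpos 1 le_rfl
  have hsum4 : Summable fun s => ((f s : ℝ) / (F s : ℝ)) ^ 2 / 4 := hsum.div_const 4
  set R : ℝ := ∑' s, ((f s : ℝ) / (F s : ℝ)) ^ 2 / 4 with hR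
  have hRnn : 0 ≤ R := tsum_nonneg (fun s => by positivity)
  -- key induction
  have key : ∀ t, 1 ≤ t → ((F t : ℝ) / (F 1 : ℝ) ≤ (A t) ^ 2 ∧
      (A t) ^ 2 ≤ ((F t : ℝ) / (F 1 : ℝ)) *
        Real.exp (∑ j ∈ Finset.Ico 1 t, ((f j : ℝ) / (F j : ℝ)) ^ 2 / 4)) := by
    intro t ht
    induction t, ht using Nat.le_induction with
    | base =>
      have hA1 : A 1 = 1 := by rw [hA 1]; simp
      rw [hA1, div_self hF1.ne']
      simp
    | succ t ht ih =>
      have hFt : (0:ℝ) < (F t : ℝ) := by exact_mod_cast hFpos t ht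
      set x : ℝ := (f t : ℝ) / (F t : ℝ) with hx
      have hx0 : 0 ≤ x := by positivity
      have hFt1 : (F (t+1) : ℝ) = (F t : ℝ) * (1 + x) := by
        have : F (t+1) = F t + f t := by
          rw [hF (t+1), hF t, Finset.sum_range_succ]
        rw [this, hx]
        push_cast
        rw [mul_add, mul_one, mul_div_cancel₀ _ hFt.ne']
      have hAt1 : A (t+1) = A t * (1 + x / 2) := by
        rw [hA (t+1), hA t, Finset.prod_Ico_succ_top (by omega)]
        congr 1
        rw [hx, div_div, mul_comm (2:ℝ)]
      have hAnn : 0 ≤ A t := by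
        rw [hA t]
        exact Finset.prod_nonneg fun j _ => by positivity
      have hSum1 : ∑ j ∈ Finset.Ico 1 (t+1), ((f j : ℝ) / (F j : ℝ)) ^ 2 / 4 =
          (∑ j ∈ Finset.Ico 1 t, ((f j : ℝ) / (F j : ℝ)) ^ 2 / 4) + x ^ 2 / 4 := by
        rw [Finset.sum_Ico_succ_top (by omega)]
      have hexp1 : (1:ℝ) + x ^ 2 / 4 ≤ Real.exp (x ^ 2 / 4) := by
        have := Real.add_one_le_exp (x ^ 2 / 4); linarith
      have hexpnn : (0:ℝ) < Real.exp (∑ j ∈ Finset.Ico 1 t, ((f j : ℝ) / (F j : ℝ)) ^ 2 / 4) :=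
        Real.exp_pos _
      constructor
      · -- lower bound
        have h1 : (1:ℝ) + x ≤ (1 + x / 2) ^ 2 := by nlinarith
        have h2 : (F t : ℝ) / (F 1 : ℝ) * (1 + x) ≤ (A t) ^ 2 * (1 + x / 2) ^ 2 := by
          have hpos : (0:ℝ) ≤ (F t : ℝ) / (F 1 : ℝ) := by positivity
          nlinarith [ih.1]
        rw [hAt1, hFt1, mul_pow]
        calc (F t : ℝ) * (1 + x) / (F 1 : ℝ)
            = (F t : ℝ) / (F 1 : ℝ) * (1 + x) := by ring
          _ ≤ (A t) ^ 2 * (1 + x / 2) ^ 2 := h2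
      · -- upper bound
        have h1 : (1 + x / 2) ^ 2 ≤ (1 + x) * (1 + x ^ 2 / 4) := by nlinarith
        have h2 : (1 + x / 2) ^ 2 ≤ (1 + x) * Real.exp (x ^ 2 / 4) := by nlinarith
        rw [hAt1, hFt1, mul_pow, hSum1, Real.exp_add]
        have hpos : (0:ℝ) ≤ (F t : ℝ) / (F 1 : ℝ) *
            Real.exp (∑ j ∈ Finset.Ico 1 t, ((f j : ℝ) / (F j : ℝ)) ^ 2 / 4) := by positivity
        calc (A t) ^ 2 * (1 + x / 2) ^ 2
            ≤ ((F t : ℝ) / (F 1 : ℝ) *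
              Real.exp (∑ j ∈ Finset.Ico 1 t, ((f j : ℝ) / (F j : ℝ)) ^ 2 / 4)) *
              ((1 + x) * Real.exp (x ^ 2 / 4)) := by
              apply mul_le_mul ih.2 h2 (by positivity) hpos
          _ = (F t : ℝ) * (1 + x) / (F 1 : ℝ) *
              (Real.exp (∑ j ∈ Finset.Ico 1 t, ((f j : ℝ) / (F j : ℝ)) ^ 2 / 4) *
               Real.exp (x ^ 2 / 4)) := by ring
  -- bound partial sums by R
  have hsumR : ∀ t, (∑ j ∈ Finset.Ico 1 t, ((f j : ℝ) / (F j : ℝ)) ^ 2 / 4) ≤ R := by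
    intro t
    exact Summable.sum_le_tsum _ (fun j _ => by positivity) hsum4
  refine ⟨1 / Real.sqrt (F 1), Real.exp (R / 2) / Real.sqrt (F 1), by positivity, ?_, ?_⟩
  · have h1 : (1:ℝ) ≤ Real.exp (R / 2) := by
      have := Real.add_one_le_exp (R / 2); linarith
    have h2 : (0:ℝ) < Real.sqrt (F 1 : ℝ) := Real.sqrt_pos.mpr hF1
    gcongr
  · intro t ht
    have hFt : (0:ℝ) < (F t : ℝ) := by exact_mod_cast hFpos t ht
    have hAnn : 0 ≤ A t := by
      rw [hA t]
      exact Finset.prod_nonneg fun j _ => by positivity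
    obtain ⟨hlow, hup⟩ := key t ht
    constructor
    · -- c * sqrt F t ≤ A t
      have h1 : Real.sqrt ((F t : ℝ) / (F 1 : ℝ)) ≤ A t := by
        have := Real.sqrt_le_sqrt hlow
        rwa [Real.sqrt_sq hAnn] at this
      calc 1 / Real.sqrt (F 1 : ℝ) * Real.sqrt (F t : ℝ)
          = Real.sqrt ((F t : ℝ) / (F 1 : ℝ)) := by
            rw [Real.sqrt_div hFt.le]; ring
        _ ≤ A t := h1
    · -- A t ≤ C * sqrt F t
      have hup2 : (A t) ^ 2 ≤ (F t : ℝ) / (F 1 : ℝ) * Real.exp R := by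
        calc (A t) ^ 2 ≤ ((F t : ℝ) / (F 1 : ℝ)) *
              Real.exp (∑ j ∈ Finset.Ico 1 t, ((f j : ℝ) / (F j : ℝ)) ^ 2 / 4) := hup
          _ ≤ (F t : ℝ) / (F 1 : ℝ) * Real.exp R := by
              apply mul_le_mul_of_nonneg_left (Real.exp_le_exp.mpr (hsumR t)) (by positivity)
      have h1 : A t ≤ Real.sqrt ((F t : ℝ) / (F 1 : ℝ) * Real.exp R) := by
        have := Real.sqrt_le_sqrt hup2
        rwa [Real.sqrt_sq hAnn] at this
      calc A t ≤ Real.sqrt ((F t : ℝ) / (F 1 : ℝ) * Real.exp R) := h1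
        _ = Real.exp (R / 2) / Real.sqrt (F 1 : ℝ) * Real.sqrt (F t : ℝ) := by
            rw [Real.sqrt_mul (by positivity), Real.sqrt_div hFt.le]
            rw [show Real.exp R = (Real.exp (R / 2)) ^ 2 from by
              rw [sq, ← Real.exp_add, add_halves], Real.sqrt_sq (Real.exp_pos _).le]
            ring

/-- Almost-sure convergence of the normalised degree (Proposition
`prop:xuexists` (iii)): under `∑ (f(s)/F(s))² < ∞`, the nonnegative martingale
`X(t) = d_u(t)/A(t)` converges almost surely to a finite nonnegative random
variable `x_u`, and consequently `d_u(t)` is of order `x_u · F(t)^{1/2}`. -/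
theorem mpa_normalised_degree_converges
    (f : ℕ → ℕ) (F : ℕ → ℕ) (hF : ∀ t, F t = ∑ i ∈ Finset.range t, f i)
    (hFpos : ∀ t, 1 ≤ t → 0 < F t)
    (hsum : Summable fun s => ((f s : ℝ) / (F s : ℝ)) ^ 2)
    (Ω : Type) [m0 : MeasurableSpace Ω] (P : Measure Ω) [IsProbabilityMeasure P]
    (𝒢 : Filtration ℕ m0)
    (d : ℕ → Ω → ℝ) (hd0 : ∀ t ω, 0 ≤ d t ω)
    (A : ℕ → ℝ)
    (hA : ∀ t, A t = ∏ j ∈ Finset.Ico 1 t, (1 + (f j : ℝ) / (2 * F j)))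
    (hmart : Martingale (fun t ω => d t ω / A t) 𝒢 P) :
    ∃ x : Ω → ℝ,
      (∀ᵐ ω ∂P, 0 ≤ x ω ∧ Tendsto (fun t => d t ω / A t) atTop (nhds (x ω))) ∧
      ∃ c C : ℝ, 0 < c ∧ c ≤ C ∧
        ∀ᵐ ω ∂P, ∀ ε : ℝ, 0 < ε → ∀ᶠ t in atTop,
          (x ω - ε) * c * Real.sqrt (F t) ≤ d t ω ∧
          d t ω ≤ (x ω + ε) * C * Real.sqrt (F t) := by
  have hApos : ∀ t, 0 < A t := by
    intro t
    rw [hA t]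
    apply Finset.prod_pos
    intro j _
    have : (0:ℝ) ≤ (f j : ℝ) / (2 * F j) := by positivity
    linarith
  have hXnn : ∀ t ω, 0 ≤ d t ω / A t := fun t ω => div_nonneg (hd0 t ω) (hApos t).le
  have hint : ∀ n, Integrable (fun ω => d n ω / A n) P := fun n => hmart.integrable n
  -- L¹ boundedness
  have hnorm : ∀ n, eLpNorm (fun ω => d n ω / A n) 1 P =
      ENNReal.ofReal (∫ ω, d n ω / A n ∂P) := by
    intro n
    rw [eLpNorm_one_eq_lintegral_enorm, ← ofReal_integral_norm_eq_lintegral_enorm (hint n)]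
    congr 1
    exact integral_congr_ae (Filter.Eventually.of_forall fun ω => Real.norm_of_nonneg (hXnn n ω))
  have hEq : ∀ n, ∫ ω, d n ω / A n ∂P = ∫ ω, d 0 ω / A 0 ∂P := by
    intro n
    have h := hmart.condExp_ae_eq (Nat.zero_le n)
    rw [← integral_condExp (𝒢.le 0), integral_congr_ae h]
  set R : ENNReal := eLpNorm (fun ω => d 0 ω / A 0) 1 P with hRdef
  have hRfin : R ≠ ⊤ := (memLp_one_iff_integrable.mpr (hint 0)).eLpNorm_ne_top
  have hbdd : ∀ n, eLpNorm (fun ω => d n ω / A n) 1 P ≤ (R.toNNReal : ℝ≥0∞) := by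
    intro n
    rw [ENNReal.coe_toNNReal hRfin, hnorm n, hEq n, hRdef, hnorm 0]
  have hae := hmart.submartingale.ae_tendsto_limitProcess hbdd
  refine ⟨𝒢.limitProcess (fun t ω => d t ω / A t) P, ?_, ?_⟩
  · filter_upwards [hae] with ω hω
    exact ⟨ge_of_tendsto' hω fun t => hXnn t ω, hω⟩
  · obtain ⟨c, C, hc, hcC, hbound⟩ := A_theta f F hF hFpos hsum A hA
    refine ⟨c, C, hc, hcC, ?_⟩
    filter_upwards [hae] with ω hω ε hε
    set x := 𝒢.limitProcess (fun t ω => d t ω / A t) P ω with hxdef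
    have hx0 : 0 ≤ x := ge_of_tendsto' hω fun t => hXnn t ω
    have hball : ∀ᶠ t in atTop, |d t ω / A t - x| < ε := by
      have := hω.eventually (Metric.ball_mem_nhds x hε)
      simpa [Real.dist_eq] using this
    filter_upwards [hball, eventually_ge_atTop 1] with t hdist ht1
    obtain ⟨hAl, hAu⟩ := hbound t ht1
    have hsq : 0 < Real.sqrt (F t) :=
      Real.sqrt_pos.mpr (by exact_mod_cast hFpos t ht1)
    have hAt : 0 < A t := hApos t
    have hd : d t ω = (d t ω / A t) * A t := (div_mul_cancel₀ _ hAt.ne').symm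
    obtain ⟨h1, h2⟩ := abs_sub_lt_iff.mp hdist
    constructor
    · -- lower bound
      rcases le_or_gt (x - ε) 0 with h | h
      · have : (x - ε) * c * Real.sqrt (F t) ≤ 0 :=
          mul_nonpos_of_nonpos_of_nonneg (mul_nonpos_of_nonpos_of_nonneg h hc.le) hsq.le
        linarith [hd0 t ω]
      · have hXl : x - ε ≤ d t ω / A t := by linarith
        calc (x - ε) * c * Real.sqrt (F t) = (x - ε) * (c * Real.sqrt (F t)) := by ring
          _ ≤ (x - ε) * A t := mul_le_mul_of_nonneg_left hAl h.le
          _ ≤ (d t ω / A t) * A t := mul_le_mul_of_nonneg_right hXl hAt.le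
          _ = d t ω := hd.symm
    · -- upper bound
      have hXu : d t ω / A t ≤ x + ε := by linarith
      calc d t ω = (d t ω / A t) * A t := hd
        _ ≤ (x + ε) * (C * Real.sqrt (F t)) :=
            mul_le_mul hXu hAu hAt.le (by linarith)
        _ = (x + ε) * C * Real.sqrt (F t) := by ring
end

section
/- Tail decay in MPA_f with linear edge growth: assume c_1 t ≤ f(t) ≤ c_2 t and c_1 t² ≤ 2F(t) ≤ c_2 t² for constants 0 < c_1 ≤ c_2, fix α ∈ (1/2, 1), and suppose a node u has degree d with b_1 t < d < b_2 t (0 < b_1 < b_2). Then the probability that u receives at least t^α new edges at stage t+1 is at most (B/t^α)^{t^α} for some constant B depending only on c_1, c_2, b_1, b_2, α, for all sufficiently large t. -/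
/-- `k^k ≤ e^k * k!` -/
lemma aux_pow_le_exp_mul_factorial (k : ℕ) :
    (k : ℝ) ^ k ≤ Real.exp 1 ^ k * (k.factorial : ℝ) := by
  have h1 : ((k : ℝ)) ^ k / (k.factorial : ℝ) ≤ Real.exp (k : ℝ) := by
    have h := Real.sum_le_exp_of_nonneg (x := (k : ℝ)) (Nat.cast_nonneg k) (k + 1)
    refine le_trans ?_ h
    have : ((k : ℝ)) ^ k / (k.factorial : ℝ)
        = ∑ i ∈ Finset.range (k + 1), if i = k then (k : ℝ) ^ i / (i.factorial : ℝ) else 0 := by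
      rw [Finset.sum_ite_eq' (Finset.range (k + 1)) k]
      simp
    rw [this]
    apply Finset.sum_le_sum
    intro i _
    split_ifs with h'
    · subst h'; exact le_refl _
    · positivity
  have h2 : Real.exp (k : ℝ) = Real.exp 1 ^ k := by
    rw [← Real.exp_nat_mul]; ring_nf
  rw [div_le_iff₀ (by positivity : (0:ℝ) < (k.factorial : ℝ))] at h1
  rw [h2] at h1
  exact h1

/-- Tail decay in `MPA_f` with linear edge growth (from the proof of
Proposition `prop:mainstep1`): assume `c₁t ≤ f(t) ≤ c₂t` and
`c₁t² ≤ 2F(t) ≤ c₂t²`, fix `α ∈ (1/2, 1)`, and suppose a node has degree `d`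
with `b₁t < d < b₂t`.  Then the probability that it receives at least `t^α` new
edges at stage `t+1` (a binomial `b(f(t), d/(2F(t)))` tail) is at most
`(B/t^α)^{t^α}` for a constant `B` and all large `t`. -/
theorem mpa_tail_decay
    (f : ℕ → ℕ) (F : ℕ → ℕ) (hF : ∀ t, F t = ∑ i ∈ Finset.range t, f i)
    (c₁ c₂ : ℝ) (hc₁ : 0 < c₁) (hc : c₁ ≤ c₂)
    (hf : ∀ t : ℕ, 1 ≤ t → c₁ * t ≤ (f t : ℝ) ∧ (f t : ℝ) ≤ c₂ * t)
    (hF2 : ∀ t : ℕ, 1 ≤ t → c₁ * t ^ 2 ≤ 2 * (F t : ℝ) ∧ 2 * (F t : ℝ) ≤ c₂ * t ^ 2)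
    (α : ℝ) (hα : 1 / 2 < α) (hα1 : α < 1)
    (b₁ b₂ : ℝ) (hb₁ : 0 < b₁) (hb : b₁ < b₂) :
    ∃ B : ℝ, 0 < B ∧ ∃ N : ℕ, ∀ t : ℕ, N ≤ t → ∀ d : ℝ,
      b₁ * t < d → d < b₂ * t →
      ∑ k ∈ Finset.Icc ⌈(t : ℝ) ^ α⌉₊ (f t),
          ((f t).choose k : ℝ) * (d / (2 * F t)) ^ k
            * (1 - d / (2 * F t)) ^ (f t - k)
        ≤ (B / (t : ℝ) ^ α) ^ ((t : ℝ) ^ α) := by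
  have hα0 : (0:ℝ) < α := by linarith
  have hb₂ : 0 < b₂ := lt_trans hb₁ hb
  have hc₂ : 0 < c₂ := lt_of_lt_of_le hc₁ hc
  set C : ℝ := c₂ * b₂ / c₁ with hCdef
  have hCpos : 0 < C := by positivity
  set B : ℝ := 2 * C * Real.exp 1 with hBdef
  have hBpos : 0 < B := by positivity
  refine ⟨B, hBpos, max 1 (max (⌈b₂ / c₁⌉₊ + 1) (⌈B ^ α⁻¹⌉₊ + 1)), ?_⟩
  intro t ht d hd1 hd2
  have ht1 : 1 ≤ t := le_trans (le_max_left _ _) ht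
  have htR : (1:ℝ) ≤ (t : ℝ) := by exact_mod_cast ht1
  have htpos : (0:ℝ) < (t : ℝ) := by linarith
  have hta : (0:ℝ) < (t:ℝ) ^ α := Real.rpow_pos_of_pos htpos α
  have ht2 : b₂ / c₁ ≤ (t:ℝ) := by
    have h : ⌈b₂ / c₁⌉₊ ≤ t := le_trans (Nat.le_succ _)
      (le_trans (le_trans (le_max_left _ _) (le_max_right _ _)) ht)
    exact le_trans (Nat.le_ceil _) (by exact_mod_cast h)
  have htB : B ≤ (t:ℝ) ^ α := by
    have h : ⌈B ^ α⁻¹⌉₊ ≤ t := le_trans (Nat.le_succ _)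
      (le_trans (le_trans (le_max_right _ _) (le_max_right _ _)) ht)
    have h1 : B ^ α⁻¹ ≤ (t:ℝ) := le_trans (Nat.le_ceil _) (by exact_mod_cast h)
    calc B = (B ^ α⁻¹) ^ α := by
            rw [← Real.rpow_mul hBpos.le, inv_mul_cancel₀ (ne_of_gt hα0), Real.rpow_one]
      _ ≤ (t:ℝ) ^ α := Real.rpow_le_rpow (Real.rpow_nonneg hBpos.le _) h1 hα0.le
  obtain ⟨hF1, hF2'⟩ := hF2 t ht1
  obtain ⟨hf1, hf2⟩ := hf t ht1
  have h2F : (0:ℝ) < 2 * (F t : ℝ) := lt_of_lt_of_le (by positivity) hF1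
  set p : ℝ := d / (2 * (F t : ℝ)) with hpdef
  have hdpos : 0 < d := lt_of_le_of_lt (by positivity) hd1
  have hp0 : 0 ≤ p := div_nonneg hdpos.le h2F.le
  have hb2t : b₂ ≤ c₁ * (t:ℝ) := by
    rw [div_le_iff₀ hc₁] at ht2; linarith
  have hp1 : p ≤ 1 := by
    rw [div_le_one h2F]
    calc d ≤ b₂ * t := hd2.le
      _ ≤ (c₁ * (t:ℝ)) * t := mul_le_mul_of_nonneg_right hb2t htpos.le
      _ = c₁ * (t:ℝ) ^ 2 := by ring
      _ ≤ 2 * (F t : ℝ) := hF1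
  have hfp : (f t : ℝ) * p ≤ C := by
    have hple : p ≤ b₂ / (c₁ * t) := by
      rw [div_le_div_iff₀ h2F (by positivity)]
      calc d * (c₁ * t) ≤ (b₂ * t) * (c₁ * t) :=
            mul_le_mul_of_nonneg_right hd2.le (by positivity)
        _ = b₂ * (c₁ * (t:ℝ) ^ 2) := by ring
        _ ≤ b₂ * (2 * (F t : ℝ)) := mul_le_mul_of_nonneg_left hF1 hb₂.le
    calc (f t : ℝ) * p ≤ (c₂ * t) * (b₂ / (c₁ * t)) :=
          mul_le_mul hf2 hple hp0 (by positivity)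
      _ = C := by rw [hCdef]; field_simp
  set S : ℕ := ⌈(t:ℝ) ^ α⌉₊ with hSdef
  have hS1 : 1 ≤ S := Nat.one_le_ceil_iff.mpr hta
  have hSa : (t:ℝ) ^ α ≤ (S:ℝ) := Nat.le_ceil _
  have hSpos : (0:ℝ) < (S:ℝ) := lt_of_lt_of_le hta hSa
  set r : ℝ := C * Real.exp 1 / (S:ℝ) with hrdef
  have hr0 : 0 ≤ r := by positivity
  clear_value C B p S r
  have hrB : 2 * r ≤ B / (t:ℝ) ^ α := by
    have h2r : 2 * r = B / (S:ℝ) := by rw [hrdef, hBdef]; ring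
    rw [h2r]
    exact div_le_div_of_nonneg_left hBpos.le hta hSa
  have hrhalf : r ≤ 1 / 2 := by
    have hB1 : B / (t:ℝ) ^ α ≤ 1 := by
      rw [div_le_one hta]; exact htB
    linarith
  have hr1 : r < 1 := lt_of_le_of_lt hrhalf (by norm_num)
  -- termwise bound
  have hterm : ∀ k ∈ Finset.Icc S (f t),
      ((f t).choose k : ℝ) * p ^ k * (1 - p) ^ (f t - k) ≤ r ^ k := by
    intro k hk
    rw [Finset.mem_Icc] at hk
    obtain ⟨hkS, hkf⟩ := hk
    have hk1 : 1 ≤ k := le_trans hS1 hkS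
    have hkpos : (0:ℝ) < (k:ℝ) := by exact_mod_cast hk1
    have step1 : ((f t).choose k : ℝ) * p ^ k * (1 - p) ^ (f t - k)
        ≤ ((f t).choose k : ℝ) * p ^ k := by
      have h1 : (1 - p) ^ (f t - k) ≤ 1 :=
        pow_le_one₀ (by linarith) (by linarith)
      calc ((f t).choose k : ℝ) * p ^ k * (1 - p) ^ (f t - k)
          ≤ ((f t).choose k : ℝ) * p ^ k * 1 := by
            apply mul_le_mul_of_nonneg_left h1 (by positivity)
        _ = ((f t).choose k : ℝ) * p ^ k := by ring
    have step2 : ((f t).choose k : ℝ) * p ^ k ≤ C ^ k / (k.factorial : ℝ) := by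
      calc ((f t).choose k : ℝ) * p ^ k
          ≤ ((f t : ℝ) ^ k / (k.factorial : ℝ)) * p ^ k := by
            apply mul_le_mul_of_nonneg_right _ (by positivity)
            exact_mod_cast Nat.choose_le_pow_div k (f t)
        _ = ((f t : ℝ) * p) ^ k / (k.factorial : ℝ) := by
            rw [mul_pow]; ring
        _ ≤ C ^ k / (k.factorial : ℝ) := by
            apply div_le_div_of_nonneg_right _ (by positivity)
            exact pow_le_pow_left₀ (by positivity) hfp k
    have step3 : C ^ k / (k.factorial : ℝ) ≤ r ^ k := by
      rw [hrdef, div_pow, div_le_div_iff₀ (by positivity) (by positivity)]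
      calc C ^ k * (S:ℝ) ^ k ≤ C ^ k * (k:ℝ) ^ k := by
            apply mul_le_mul_of_nonneg_left _ (by positivity)
            exact pow_le_pow_left₀ hSpos.le (by exact_mod_cast hkS) k
        _ ≤ C ^ k * (Real.exp 1 ^ k * (k.factorial : ℝ)) := by
            apply mul_le_mul_of_nonneg_left (aux_pow_le_exp_mul_factorial k) (by positivity)
        _ = (C * Real.exp 1) ^ k * (k.factorial : ℝ) := by rw [mul_pow]; ring
    linarith
  have hsum1 : ∑ k ∈ Finset.Icc S (f t),
      ((f t).choose k : ℝ) * p ^ k * (1 - p) ^ (f t - k)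
      ≤ ∑ k ∈ Finset.Icc S (f t), r ^ k := Finset.sum_le_sum hterm
  -- geometric sum bound
  have hsum2 : ∑ k ∈ Finset.Icc S (f t), r ^ k ≤ 2 * r ^ S := by
    rw [← Finset.Ico_add_one_right_eq_Icc, Finset.sum_Ico_eq_sum_range]
    have hgeom : ∑ j ∈ Finset.range (f t + 1 - S), r ^ j ≤ 2 := by
      calc ∑ j ∈ Finset.range (f t + 1 - S), r ^ j
          ≤ ∑' j : ℕ, r ^ j := by
            apply Summable.sum_le_tsum _ (fun i _ => by positivity)
            exact summable_geometric_of_lt_one hr0 hr1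
        _ = (1 - r)⁻¹ := tsum_geometric_of_lt_one hr0 hr1
        _ ≤ 2 := by
            rw [inv_le_comm₀ (by linarith) (by norm_num)]
            linarith
    calc ∑ j ∈ Finset.range (f t + 1 - S), r ^ (S + j)
        = r ^ S * ∑ j ∈ Finset.range (f t + 1 - S), r ^ j := by
          rw [Finset.mul_sum]
          exact Finset.sum_congr rfl fun j _ => by rw [pow_add]
      _ ≤ r ^ S * 2 := mul_le_mul_of_nonneg_left hgeom (by positivity)
      _ = 2 * r ^ S := by ring
  have hsum3 : 2 * r ^ S ≤ (2 * r) ^ S := by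
    rw [mul_pow]
    apply mul_le_mul_of_nonneg_right _ (by positivity)
    exact le_self_pow₀ (by norm_num) (by omega)
  have hsum4 : (2 * r) ^ S ≤ (B / (t:ℝ) ^ α) ^ S :=
    pow_le_pow_left₀ (by positivity) hrB S
  have hsum5 : (B / (t:ℝ) ^ α) ^ S ≤ (B / (t:ℝ) ^ α) ^ ((t:ℝ) ^ α) := by
    rw [← Real.rpow_natCast (B / (t:ℝ) ^ α) S]
    apply Real.rpow_le_rpow_of_exponent_ge (by positivity)
    · rw [div_le_one hta]; exact htB
    · exact hSa
  calc ∑ k ∈ Finset.Icc S (f t),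
        ((f t).choose k : ℝ) * p ^ k * (1 - p) ^ (f t - k)
      ≤ ∑ k ∈ Finset.Icc S (f t), r ^ k := hsum1
    _ ≤ 2 * r ^ S := hsum2
    _ ≤ (2 * r) ^ S := hsum3
    _ ≤ (B / (t:ℝ) ^ α) ^ S := hsum4
    _ ≤ (B / (t:ℝ) ^ α) ^ ((t:ℝ) ^ α) := hsum5
end
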